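/- arXiv:2412.12741 — 5 statements merged into one kernel-verified Lean document; each statement's English description precedes it below -/
import Mathlib

section
/- Let d ≥ 1 and let f : P₂(ℝ^d) × ℝ^d × ℝ^d → ℝ be continuous (where P₂(ℝ^d) is equipped with the 2-Wasserstein distance) and symmetric in its last two arguments, i.e. f(μ,x,y) = f(μ,y,x) for all μ, x, y. Assume that (a) for every μ ∈ P₂(ℝ^d) and every coupling γ of μ with itself such that (x,y) ↦ f(μ,x,y) is γ-integrable one has ∫ f(μ,x,y) γ(dx,dy) ≥ 0 (equivalently, E[f(μ,X,Y)] ≥ 0 for all square-integrable random vectors X, Y both with law μ), and (b) f(μ,x,x) = 0 for every μ ∈ P₂(ℝ^d) and x ∈ ℝ^d. Then the inequality holds pointwise: f(μ,x,y) ≥ 0 for every μ ∈ P₂(ℝ^d) and all (x,y) ∈ ℝ^d × ℝ^d. -/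
open MeasureTheory Set
open scoped ENNReal RealInnerProductSpace NNReal

noncomputable section

/-- A coupling of two measures on `ℝ^d`: a measure on the product whose marginals
are `μ` and `ν`. -/
def IsCoupling {d : ℕ} (γ : Measure (EuclideanSpace ℝ (Fin d) × EuclideanSpace ℝ (Fin d)))
    (μ ν : Measure (EuclideanSpace ℝ (Fin d))) : Prop :=
  γ.map Prod.fst = μ ∧ γ.map Prod.snd = ν

/-- `μ ∈ P₂(ℝ^d)`: a Borel probability measure with finite second moment. -/
def MemP2 {d : ℕ} (μ : Measure (EuclideanSpace ℝ (Fin d))) : Prop :=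
  IsProbabilityMeasure μ ∧ Integrable (fun x => ‖x‖ ^ 2) μ

/-- The 2-Wasserstein distance, as the infimum over couplings. -/
def W2 {d : ℕ} (μ ν : Measure (EuclideanSpace ℝ (Fin d))) : ℝ≥0∞ :=
  ⨅ γ ∈ {γ : Measure (EuclideanSpace ℝ (Fin d) × EuclideanSpace ℝ (Fin d)) |
      IsCoupling γ μ ν},
    (∫⁻ p, (‖p.1 - p.2‖₊ : ℝ≥0∞) ^ 2 ∂γ) ^ ((1 : ℝ) / 2)

/-- Integrability with respect to a Dirac mass. -/
lemma integrable_dirac_of_aesm {α : Type*} [MeasurableSpace α] [MeasurableSingletonClass α]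
    {f : α → ℝ} {a : α} (hf : AEStronglyMeasurable f (Measure.dirac a)) :
    Integrable f (Measure.dirac a) := by
  refine ⟨hf, ?_⟩
  show (∫⁻ z, (‖f z‖₊ : ℝ≥0∞) ∂Measure.dirac a) < ⊤
  rw [lintegral_dirac]
  exact ENNReal.coe_lt_top

/-- The self-distance in `W2` is at most zero (via the identity coupling). -/
lemma W2_self_le_zero {d : ℕ} (ν : Measure (EuclideanSpace ℝ (Fin d)))
    [IsProbabilityMeasure ν] : W2 ν ν ≤ 0 := by
  have hmdiag : Measurable (fun z : EuclideanSpace ℝ (Fin d) => (z, z)) :=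
    measurable_id.prodMk measurable_id
  have hcost : Measurable (fun p : EuclideanSpace ℝ (Fin d) × EuclideanSpace ℝ (Fin d) =>
      ((‖p.1 - p.2‖₊ : ℝ≥0∞)) ^ 2) := by
    have : Measurable (fun p : EuclideanSpace ℝ (Fin d) × EuclideanSpace ℝ (Fin d) =>
        p.1 - p.2) := (continuous_fst.sub continuous_snd).measurable
    exact (this.nnnorm.coe_nnreal_ennreal).pow_const 2
  have hfst : (Prod.fst ∘ fun z : EuclideanSpace ℝ (Fin d) => (z, z)) = id := rfl
  have hsnd : (Prod.snd ∘ fun z : EuclideanSpace ℝ (Fin d) => (z, z)) = id := rfl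
  have hmem : (ν.map (fun z : EuclideanSpace ℝ (Fin d) => (z, z))) ∈
      {γ : Measure (EuclideanSpace ℝ (Fin d) × EuclideanSpace ℝ (Fin d)) |
        IsCoupling γ ν ν} := by
    constructor
    · rw [Measure.map_map measurable_fst hmdiag, hfst, Measure.map_id]
    · rw [Measure.map_map measurable_snd hmdiag, hsnd, Measure.map_id]
  unfold W2
  refine le_trans (iInf₂_le (ν.map (fun z : EuclideanSpace ℝ (Fin d) => (z, z))) hmem) ?_
  rw [lintegral_map hcost hmdiag]
  simp

/-- **Proposition 1.2.** If `f : P₂(ℝ^d) × ℝ^d × ℝ^d → ℝ` is continuous (w.r.t. the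
`W₂` distance in the measure argument), symmetric in `(x,y)`, vanishes on the diagonal,
and satisfies `∫ f(μ,x,y) γ(dx,dy) ≥ 0` for every coupling `γ` of `μ` with itself,
then `f(μ,x,y) ≥ 0` pointwise. -/
theorem expectation_to_pointwise (d : ℕ) (hd : 1 ≤ d)
    (f : Measure (EuclideanSpace ℝ (Fin d)) → EuclideanSpace ℝ (Fin d) →
      EuclideanSpace ℝ (Fin d) → ℝ)
    (hsymm : ∀ μ x y, f μ x y = f μ y x)
    (hcont : ∀ μ, MemP2 μ → ∀ x y : EuclideanSpace ℝ (Fin d), ∀ ε > (0 : ℝ), ∃ δ > (0 : ℝ),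
      ∀ ν, MemP2 ν → ∀ x' y' : EuclideanSpace ℝ (Fin d),
        W2 μ ν < ENNReal.ofReal δ → dist x x' < δ → dist y y' < δ →
        |f ν x' y' - f μ x y| < ε)
    (hpos : ∀ μ, MemP2 μ →
      ∀ γ : Measure (EuclideanSpace ℝ (Fin d) × EuclideanSpace ℝ (Fin d)),
        IsCoupling γ μ μ →
        Integrable (fun p : EuclideanSpace ℝ (Fin d) × EuclideanSpace ℝ (Fin d) =>
          f μ p.1 p.2) γ →
        0 ≤ ∫ p, f μ p.1 p.2 ∂γ)
    (hdiag : ∀ μ, MemP2 μ → ∀ x, f μ x x = 0) :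
    ∀ μ, MemP2 μ → ∀ x y, 0 ≤ f μ x y := by
  classical
  intro μ hμ x y
  haveI hμprob : IsProbabilityMeasure μ := hμ.1
  by_contra hneg
  push_neg at hneg
  obtain ⟨δ, hδ0, hδ⟩ := hcont μ hμ x y (-f μ x y) (by linarith)
  have hmdiag : Measurable (fun z : EuclideanSpace ℝ (Fin d) => (z, z)) :=
    measurable_id.prodMk measurable_id
  have hcost : Measurable (fun p : EuclideanSpace ℝ (Fin d) × EuclideanSpace ℝ (Fin d) =>
      ((‖p.1 - p.2‖₊ : ℝ≥0∞)) ^ 2) := by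
    have : Measurable (fun p : EuclideanSpace ℝ (Fin d) × EuclideanSpace ℝ (Fin d) =>
        p.1 - p.2) := (continuous_fst.sub continuous_snd).measurable
    exact (this.nnnorm.coe_nnreal_ennreal).pow_const 2
  have hfst_diag : (Prod.fst ∘ fun z : EuclideanSpace ℝ (Fin d) => (z, z)) = id := rfl
  have hsnd_diag : (Prod.snd ∘ fun z : EuclideanSpace ℝ (Fin d) => (z, z)) = id := rfl
  -- integrability of second moments around a point
  have hInt : ∀ a : EuclideanSpace ℝ (Fin d), Integrable (fun z => ‖z - a‖ ^ 2) μ := by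
    intro a
    have hb : Integrable (fun z : EuclideanSpace ℝ (Fin d) =>
        2 * ‖z‖ ^ 2 + 2 * ‖a‖ ^ 2) μ := (hμ.2.const_mul 2).add (integrable_const _)
    refine hb.mono' ?_ ?_
    · exact ((continuous_id.sub continuous_const).norm.pow 2).aestronglyMeasurable
    · filter_upwards with z
      rw [Real.norm_eq_abs, abs_of_nonneg (by positivity)]
      have h1 : ‖z - a‖ ^ 2 ≤ (‖z‖ + ‖a‖) ^ 2 :=
        pow_le_pow_left₀ (norm_nonneg _) (norm_sub_le z a) 2
      nlinarith [sq_nonneg (‖z‖ - ‖a‖)]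
  have hA : ∀ a : EuclideanSpace ℝ (Fin d),
      (∫⁻ z, ((‖z - a‖₊ : ℝ≥0∞)) ^ 2 ∂μ) < ⊤ := by
    intro a
    have h := (hInt a).2
    have heq : (∫⁻ z, ((‖z - a‖₊ : ℝ≥0∞)) ^ 2 ∂μ)
        = ∫⁻ z, (‖(‖z - a‖ ^ 2 : ℝ)‖₊ : ℝ≥0∞) ∂μ := by
      refine lintegral_congr fun z => ?_
      rw [nnnorm_pow, nnnorm_norm, ENNReal.coe_pow]
    rw [heq]
    exact h
  -- the total second-moment constant
  set A : ℝ≥0∞ := (∫⁻ z, ((‖z - x‖₊ : ℝ≥0∞)) ^ 2 ∂μ) + (∫⁻ z, ((‖z - y‖₊ : ℝ≥0∞)) ^ 2 ∂μ)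
    with hAdef
  have hAfin : A ≠ ⊤ := by
    simp only [hAdef]
    exact (ENNReal.add_lt_top.2 ⟨hA x, hA y⟩).ne
  set B : ℝ := A.toReal with hBdef
  have hB0 : 0 ≤ B := ENNReal.toReal_nonneg
  -- choosing the mixing parameter t
  set t : ℝ := min (4⁻¹) (δ ^ 2 / (2 * (B + 1))) with htdef
  have ht0 : 0 < t := by
    apply lt_min (by norm_num)
    positivity
  have ht2 : 2 * t ≤ 1 := by
    have : t ≤ 4⁻¹ := min_le_left _ _
    linarith
  have htB : t * B < δ ^ 2 := by
    have h1 : t ≤ δ ^ 2 / (2 * (B + 1)) := min_le_right _ _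
    have h2 : 0 < 2 * (B + 1) := by linarith
    have h3 : t * B ≤ δ ^ 2 / (2 * (B + 1)) * B :=
      mul_le_mul_of_nonneg_right h1 hB0
    have h4 : δ ^ 2 / (2 * (B + 1)) * B < δ ^ 2 := by
      rw [div_mul_eq_mul_div, div_lt_iff₀ h2]
      nlinarith [sq_nonneg δ, hδ0]
    linarith
  -- the perturbed measure ν
  set s : ℝ≥0∞ := ENNReal.ofReal (1 - 2 * t) with hsdef
  set τ : ℝ≥0∞ := ENNReal.ofReal t with hτdef
  have hsne : s ≠ ⊤ := ENNReal.ofReal_ne_top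
  have hτne : τ ≠ ⊤ := ENNReal.ofReal_ne_top
  have hsum : s + τ + τ = 1 := by
    rw [hsdef, hτdef, ← ENNReal.ofReal_add (by linarith) ht0.le,
      ← ENNReal.ofReal_add (by linarith) ht0.le]
    have : 1 - 2 * t + t + t = 1 := by ring
    rw [this, ENNReal.ofReal_one]
  set ν : Measure (EuclideanSpace ℝ (Fin d)) :=
    s • μ + τ • Measure.dirac x + τ • Measure.dirac y with hνdef
  haveI hνprob : IsProbabilityMeasure ν := by
    constructor
    rw [hνdef]
    simp only [Measure.add_apply, Measure.smul_apply, smul_eq_mul, measure_univ, mul_one,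
      Measure.dirac_apply_of_mem (mem_univ _)]
    exact hsum
  have hνP2 : MemP2 ν := by
    refine ⟨hνprob, ?_⟩
    have hc : Continuous (fun z : EuclideanSpace ℝ (Fin d) => ‖z‖ ^ 2) :=
      continuous_norm.pow 2
    exact ((hμ.2.smul_measure hsne).add_measure
      ((integrable_dirac_of_aesm hc.aestronglyMeasurable).smul_measure hτne)).add_measure
      ((integrable_dirac_of_aesm hc.aestronglyMeasurable).smul_measure hτne)
  -- continuity of f ν (in the space variables)
  have hfνcont : Continuous (fun p : EuclideanSpace ℝ (Fin d) × EuclideanSpace ℝ (Fin d) =>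
      f ν p.1 p.2) := by
    rw [Metric.continuous_iff]
    intro p ε' hε'
    obtain ⟨δ', hδ'0, hδ'⟩ := hcont ν hνP2 p.1 p.2 ε' hε'
    refine ⟨δ', hδ'0, fun q hq => ?_⟩
    have hW : W2 ν ν < ENNReal.ofReal δ' :=
      lt_of_le_of_lt (W2_self_le_zero ν) (ENNReal.ofReal_pos.2 hδ'0)
    have h1 : dist p.1 q.1 < δ' := by
      rw [dist_comm]
      exact lt_of_le_of_lt (le_max_left _ _) (by rwa [Prod.dist_eq] at hq)
    have h2 : dist p.2 q.2 < δ' := by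
      rw [dist_comm]
      exact lt_of_le_of_lt (le_max_right _ _) (by rwa [Prod.dist_eq] at hq)
    have := hδ' ν hνP2 q.1 q.2 hW h1 h2
    rwa [Real.dist_eq]
  -- the symmetric coupling of ν with itself
  set γt : Measure (EuclideanSpace ℝ (Fin d) × EuclideanSpace ℝ (Fin d)) :=
    s • μ.map (fun z : EuclideanSpace ℝ (Fin d) => (z, z))
      + τ • Measure.dirac (x, y) + τ • Measure.dirac (y, x) with hγtdef
  have hγtcoupling : IsCoupling γt ν ν := by
    constructor
    · rw [hγtdef, Measure.map_add _ _ measurable_fst, Measure.map_add _ _ measurable_fst,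
        Measure.map_smul, Measure.map_smul, Measure.map_smul,
        Measure.map_map measurable_fst hmdiag, hfst_diag, Measure.map_id,
        Measure.map_dirac' measurable_fst, Measure.map_dirac' measurable_fst]
    · rw [hγtdef, Measure.map_add _ _ measurable_snd, Measure.map_add _ _ measurable_snd,
        Measure.map_smul, Measure.map_smul, Measure.map_smul,
        Measure.map_map measurable_snd hmdiag, hsnd_diag, Measure.map_id,
        Measure.map_dirac' measurable_snd, Measure.map_dirac' measurable_snd]
      rw [hνdef, add_assoc, add_assoc,
        add_comm (τ • Measure.dirac y) (τ • Measure.dirac x)]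
  -- integrability of f ν over γt
  have hg_diag : Integrable
      (fun p : EuclideanSpace ℝ (Fin d) × EuclideanSpace ℝ (Fin d) => f ν p.1 p.2)
      (μ.map (fun z : EuclideanSpace ℝ (Fin d) => (z, z))) := by
    refine (integrable_map_measure hfνcont.aestronglyMeasurable hmdiag.aemeasurable).2 ?_
    have : ((fun p : EuclideanSpace ℝ (Fin d) × EuclideanSpace ℝ (Fin d) => f ν p.1 p.2)
        ∘ (fun z : EuclideanSpace ℝ (Fin d) => (z, z))) = fun _ => (0 : ℝ) :=
      funext fun z => hdiag ν hνP2 z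
    rw [this]
    exact integrable_const 0
  have hg_int : Integrable
      (fun p : EuclideanSpace ℝ (Fin d) × EuclideanSpace ℝ (Fin d) => f ν p.1 p.2) γt := by
    rw [hγtdef]
    exact ((hg_diag.smul_measure hsne).add_measure
      ((integrable_dirac_of_aesm hfνcont.aestronglyMeasurable).smul_measure hτne)).add_measure
      ((integrable_dirac_of_aesm hfνcont.aestronglyMeasurable).smul_measure hτne)
  -- the expectation computation
  have hsreal : s.toReal = 1 - 2 * t := ENNReal.toReal_ofReal (by linarith)
  have hτreal : τ.toReal = t := ENNReal.toReal_ofReal ht0.le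
  have hint_diag : ∫ p, f ν p.1 p.2 ∂(μ.map (fun z : EuclideanSpace ℝ (Fin d) => (z, z))) = 0 := by
    rw [integral_map hmdiag.aemeasurable hfνcont.aestronglyMeasurable]
    simp [hdiag ν hνP2]
  have hval : ∫ p, f ν p.1 p.2 ∂γt = 2 * t * f ν x y := by
    rw [hγtdef,
      integral_add_measure ((hg_diag.smul_measure hsne).add_measure
        ((integrable_dirac_of_aesm hfνcont.aestronglyMeasurable).smul_measure hτne))
        ((integrable_dirac_of_aesm hfνcont.aestronglyMeasurable).smul_measure hτne),
      integral_add_measure (hg_diag.smul_measure hsne)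
        ((integrable_dirac_of_aesm hfνcont.aestronglyMeasurable).smul_measure hτne),
      integral_smul_measure, integral_smul_measure, integral_smul_measure,
      hint_diag, integral_dirac, integral_dirac]
    simp only [smul_eq_mul, mul_zero, zero_add, hsreal, hτreal]
    rw [hsymm ν y x]
    ring
  have hfν0 : 0 ≤ f ν x y := by
    have h := hpos ν hνP2 γt hγtcoupling hg_int
    rw [hval] at h
    nlinarith
  -- the W2 bound: coupling of μ with ν
  have hmx : Measurable (fun z : EuclideanSpace ℝ (Fin d) => (z, x)) :=
    measurable_id.prodMk measurable_const
  have hmy : Measurable (fun z : EuclideanSpace ℝ (Fin d) => (z, y)) :=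
    measurable_id.prodMk measurable_const
  have hfst_x : (Prod.fst ∘ fun z : EuclideanSpace ℝ (Fin d) => (z, x)) = id := rfl
  have hfst_y : (Prod.fst ∘ fun z : EuclideanSpace ℝ (Fin d) => (z, y)) = id := rfl
  have hsnd_x : (Prod.snd ∘ fun z : EuclideanSpace ℝ (Fin d) => (z, x)) = fun _ => x := rfl
  have hsnd_y : (Prod.snd ∘ fun z : EuclideanSpace ℝ (Fin d) => (z, y)) = fun _ => y := rfl
  set κ : Measure (EuclideanSpace ℝ (Fin d) × EuclideanSpace ℝ (Fin d)) :=
    s • μ.map (fun z : EuclideanSpace ℝ (Fin d) => (z, z))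
      + τ • μ.map (fun z : EuclideanSpace ℝ (Fin d) => (z, x))
      + τ • μ.map (fun z : EuclideanSpace ℝ (Fin d) => (z, y)) with hκdef
  have hκcoupling : IsCoupling κ μ ν := by
    constructor
    · rw [hκdef, Measure.map_add _ _ measurable_fst, Measure.map_add _ _ measurable_fst,
        Measure.map_smul, Measure.map_smul, Measure.map_smul,
        Measure.map_map measurable_fst hmdiag, Measure.map_map measurable_fst hmx,
        Measure.map_map measurable_fst hmy, hfst_diag, hfst_x, hfst_y, Measure.map_id,
        ← add_smul, ← add_smul, hsum, one_smul]
    · rw [hκdef, Measure.map_add _ _ measurable_snd, Measure.map_add _ _ measurable_snd,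
        Measure.map_smul, Measure.map_smul, Measure.map_smul,
        Measure.map_map measurable_snd hmdiag, Measure.map_map measurable_snd hmx,
        Measure.map_map measurable_snd hmy, hsnd_diag, hsnd_x, hsnd_y, Measure.map_id,
        Measure.map_const, Measure.map_const, measure_univ, one_smul, one_smul, hνdef]
  have hκcost : (∫⁻ p, ((‖p.1 - p.2‖₊ : ℝ≥0∞)) ^ 2 ∂κ) = τ * A := by
    rw [hκdef, lintegral_add_measure, lintegral_add_measure, lintegral_smul_measure,
      lintegral_smul_measure, lintegral_smul_measure,
      lintegral_map hcost hmdiag, lintegral_map hcost hmx, lintegral_map hcost hmy]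
    have h0 : (∫⁻ z : EuclideanSpace ℝ (Fin d),
        ((‖(z, z).1 - (z, z).2‖₊ : ℝ≥0∞)) ^ 2 ∂μ) = 0 := by
      simp
    rw [h0, smul_zero, zero_add, hAdef, mul_add, smul_eq_mul, smul_eq_mul]
  have hWbound : W2 μ ν < ENNReal.ofReal δ := by
    have hmem : κ ∈ {γ : Measure (EuclideanSpace ℝ (Fin d) × EuclideanSpace ℝ (Fin d)) |
        IsCoupling γ μ ν} := hκcoupling
    have hle : W2 μ ν ≤ (∫⁻ p, ((‖p.1 - p.2‖₊ : ℝ≥0∞)) ^ 2 ∂κ) ^ ((1 : ℝ) / 2) := by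
      unfold W2
      exact iInf₂_le κ hmem
    have hAor : A = ENNReal.ofReal B := (ENNReal.ofReal_toReal hAfin).symm
    have hcosteq : (∫⁻ p, ((‖p.1 - p.2‖₊ : ℝ≥0∞)) ^ 2 ∂κ) = ENNReal.ofReal (t * B) := by
      rw [hκcost, hAor, hτdef, ← ENNReal.ofReal_mul ht0.le]
    have hrpow : (ENNReal.ofReal (t * B)) ^ ((1 : ℝ) / 2)
        = ENNReal.ofReal ((t * B) ^ ((1 : ℝ) / 2)) :=
      ENNReal.ofReal_rpow_of_nonneg (by positivity) (by norm_num)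
    have hlt : (t * B) ^ ((1 : ℝ) / 2) < δ := by
      have h1 : (t * B) ^ ((1 : ℝ) / 2) < (δ ^ 2) ^ ((1 : ℝ) / 2) :=
        Real.rpow_lt_rpow (by positivity) htB (by norm_num)
      have h2 : ((δ : ℝ) ^ 2) ^ ((1 : ℝ) / 2) = δ := by
        rw [← Real.rpow_natCast δ 2, ← Real.rpow_mul hδ0.le]; norm_num
      rwa [h2] at h1
    calc W2 μ ν ≤ (∫⁻ p, ((‖p.1 - p.2‖₊ : ℝ≥0∞)) ^ 2 ∂κ) ^ ((1 : ℝ) / 2) := hle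
      _ = ENNReal.ofReal ((t * B) ^ ((1 : ℝ) / 2)) := by rw [hcosteq, hrpow]
      _ < ENNReal.ofReal δ := (ENNReal.ofReal_lt_ofReal_iff hδ0).2 hlt
  -- conclude via continuity
  have hclose := hδ ν hνP2 x y hWbound (by simpa using hδ0) (by simpa using hδ0)
  rw [abs_lt] at hclose
  linarith [hclose.2, hfν0]
end
end

section
/- Let U : ℝ^d × P₂(ℝ^d) → ℝ^d be continuous (where P₂(ℝ^d) is equipped with the 2-Wasserstein distance) and L²-monotone. Then for every μ ∈ P₂(ℝ^d) the map x ↦ U(x,μ) is monotone in the classical sense: for all x, y ∈ ℝ^d, (U(x,μ) − U(y,μ)) · (x − y) ≥ 0. -/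
open MeasureTheory Set
open scoped ENNReal RealInnerProductSpace NNReal

noncomputable section

section Aux

variable {d : ℕ}

local notation "E" => EuclideanSpace ℝ (Fin d)

lemma my_integrable_dirac {α F : Type*} [MeasurableSpace α] [MeasurableSingletonClass α]
    [NormedAddCommGroup F] (f : α → F) (a : α) : Integrable f (Measure.dirac a) :=
  (integrable_const (f a)).congr (ae_eq_dirac f).symm

lemma my_diag_meas : Measurable (fun z : E => (z, z)) :=
  measurable_id.prodMk measurable_id

/-- second moment type integrability -/
lemma my_int_shift (μ : Measure E) (hμ : MemP2 μ) (x : E) :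
    Integrable (fun z => ‖z - x‖ ^ 2) μ := by
  haveI := hμ.1
  have hb : Integrable (fun z : E => 2 * ‖z‖ ^ 2 + 2 * ‖x‖ ^ 2) μ :=
    (hμ.2.const_mul 2).add (integrable_const _)
  refine hb.mono' ?_ ?_
  · exact (Continuous.aestronglyMeasurable (by continuity))
  · filter_upwards with z
    have h1 : ‖z - x‖ ≤ ‖z‖ + ‖x‖ := norm_sub_le z x
    have h2 : (0:ℝ) ≤ ‖z - x‖ := norm_nonneg _
    have : ‖z - x‖^2 ≤ (‖z‖ + ‖x‖)^2 := by nlinarith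
    have h3 : (‖z‖ + ‖x‖)^2 ≤ 2*‖z‖^2 + 2*‖x‖^2 := by nlinarith [sq_nonneg (‖z‖ - ‖x‖)]
    simp only [Real.norm_eq_abs, abs_of_nonneg (sq_nonneg ‖z - x‖)]
    linarith

lemma my_lintegral_shift_lt_top (μ : Measure E) (hμ : MemP2 μ) (x : E) :
    (∫⁻ z, (‖z - x‖₊ : ℝ≥0∞) ^ 2 ∂μ) < ⊤ := by
  have h : ∀ z : E, (‖z - x‖₊ : ℝ≥0∞) ^ 2 = ENNReal.ofReal (‖z - x‖ ^ 2) := by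
    intro z
    rw [ENNReal.ofReal_pow (norm_nonneg _), ← ENNReal.ofReal_coe_nnreal, coe_nnnorm]
  simp_rw [h]
  haveI := hμ.1
  exact (my_int_shift μ hμ x).lintegral_lt_top

/-- the mixed measure is in P2 -/
lemma my_memP2_mix (μ : Measure E) (hμ : MemP2 μ) {t : ℝ} (h0 : 0 ≤ t) (h1 : t ≤ 1) (x : E) :
    MemP2 (ENNReal.ofReal (1 - t) • μ + ENNReal.ofReal t • Measure.dirac x) := by
  have hμp := hμ.1
  constructor
  · constructor
    simp only [Measure.add_apply, Measure.smul_apply, smul_eq_mul, measure_univ, mul_one]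
    rw [← ENNReal.ofReal_add (by linarith) h0]
    norm_num
  · exact (hμ.2.smul_measure ENNReal.ofReal_ne_top).add_measure
      ((my_integrable_dirac _ x).smul_measure ENNReal.ofReal_ne_top)

lemma my_coupling_mix (μ : Measure E) (hμ : IsProbabilityMeasure μ) {t : ℝ} (x y : E) :
    IsCoupling (ENNReal.ofReal (1 - t) • μ.map (fun z => (z, z))
        + ENNReal.ofReal t • Measure.dirac (x, y))
      (ENNReal.ofReal (1 - t) • μ + ENNReal.ofReal t • Measure.dirac x)
      (ENNReal.ofReal (1 - t) • μ + ENNReal.ofReal t • Measure.dirac y) := by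
  constructor
  · rw [Measure.map_add _ _ measurable_fst, Measure.map_smul, Measure.map_smul,
      Measure.map_map measurable_fst my_diag_meas, Measure.map_dirac' measurable_fst]
    simp [Function.comp_def]
  · rw [Measure.map_add _ _ measurable_snd, Measure.map_smul, Measure.map_smul,
      Measure.map_map measurable_snd my_diag_meas, Measure.map_dirac' measurable_snd]
    simp [Function.comp_def]

/-- coupling witnessing the W2 bound -/
lemma my_coupling_W2 (μ : Measure E) (hμ : IsProbabilityMeasure μ) {t : ℝ}
    (h0 : 0 ≤ t) (h1 : t ≤ 1) (x : E) :
    IsCoupling (ENNReal.ofReal (1 - t) • μ.map (fun z => (z, z))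
        + ENNReal.ofReal t • μ.map (fun z => (z, x)))
      μ (ENNReal.ofReal (1 - t) • μ + ENNReal.ofReal t • Measure.dirac x) := by
  have hmx : Measurable (fun z : E => (z, x)) := measurable_id.prodMk measurable_const
  constructor
  · rw [Measure.map_add _ _ measurable_fst, Measure.map_smul, Measure.map_smul,
      Measure.map_map measurable_fst my_diag_meas,
      Measure.map_map measurable_fst hmx]
    simp only [Function.comp_def]
    rw [Measure.map_id', ← add_smul, ← ENNReal.ofReal_add (by linarith) h0]
    norm_num
  · rw [Measure.map_add _ _ measurable_snd, Measure.map_smul, Measure.map_smul,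
      Measure.map_map measurable_snd my_diag_meas,
      Measure.map_map measurable_snd hmx]
    simp only [Function.comp_def]
    rw [Measure.map_id', Measure.map_const, measure_univ, one_smul]

lemma my_W2_mix_le (μ : Measure E) (hμ : IsProbabilityMeasure μ) {t : ℝ}
    (h0 : 0 ≤ t) (h1 : t ≤ 1) (x : E) :
    W2 μ (ENNReal.ofReal (1 - t) • μ + ENNReal.ofReal t • Measure.dirac x)
      ≤ (ENNReal.ofReal t * ∫⁻ z, (‖z - x‖₊ : ℝ≥0∞) ^ 2 ∂μ) ^ ((1:ℝ)/2) := by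
  have hmx : Measurable (fun z : E => (z, x)) := measurable_id.prodMk measurable_const
  have hcost : Measurable (fun p : E × E => (‖p.1 - p.2‖₊ : ℝ≥0∞) ^ 2) := by
    exact ((measurable_fst.sub measurable_snd).nnnorm.coe_nnreal_ennreal).pow_const 2
  refine iInf₂_le_of_le _ (my_coupling_W2 μ hμ h0 h1 x) (le_of_eq ?_)
  congr 1
  rw [lintegral_add_measure, lintegral_smul_measure, lintegral_smul_measure,
    lintegral_map hcost my_diag_meas,
    lintegral_map hcost hmx]
  simp

end Aux

section Aux2

variable {d : ℕ}

local notation "E" => EuclideanSpace ℝ (Fin d)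

lemma my_integral_mix (f : E × E → ℝ) (hf : ∀ z : E, f (z, z) = 0)
    (μ : Measure E) [IsProbabilityMeasure μ] {t : ℝ} (h0 : 0 ≤ t) (x y : E) :
    ∫ p, f p ∂(ENNReal.ofReal (1 - t) • μ.map (fun z => (z, z))
        + ENNReal.ofReal t • Measure.dirac (x, y)) = t * f (x, y) := by
  have hs : MeasurableSet {p : E × E | p.1 = p.2} :=
    measurableSet_eq_fun measurable_fst measurable_snd
  have hdiag : ∀ᵐ p ∂(μ.map (fun z : E => (z, z))), p.1 = p.2 := by
    rw [Filter.eventually_iff, mem_ae_iff]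
    rw [Measure.map_apply my_diag_meas hs.compl]
    convert measure_empty
    · ext z; simp
    · infer_instance
  have h1 : f =ᵐ[μ.map (fun z : E => (z, z))] 0 := by
    filter_upwards [hdiag] with p hp
    obtain ⟨a, b⟩ := p
    simp only at hp
    subst hp
    exact hf a
  have hint1 : Integrable f (μ.map (fun z : E => (z, z))) :=
    (integrable_zero _ _ _).congr h1.symm
  have hint2 : Integrable f (Measure.dirac (x, y)) := my_integrable_dirac f (x, y)
  rw [integral_add_measure (hint1.smul_measure ENNReal.ofReal_ne_top)
      (hint2.smul_measure ENNReal.ofReal_ne_top),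
    integral_smul_measure, integral_smul_measure, integral_congr_ae h1,
    integral_dirac, ENNReal.toReal_ofReal h0]
  simp

end Aux2

/-- **Lemma (Section 2.2).** A continuous `L²`-monotone function
`U : ℝ^d × P₂(ℝ^d) → ℝ^d` is, for each fixed measure `μ`, monotone in the classical
sense in its space variable. -/
theorem L2monotone_implies_pointwise_monotone (d : ℕ)
    (U : EuclideanSpace ℝ (Fin d) → Measure (EuclideanSpace ℝ (Fin d)) →
      EuclideanSpace ℝ (Fin d))
    (hcont : ∀ μ, MemP2 μ → ∀ x : EuclideanSpace ℝ (Fin d), ∀ ε > (0 : ℝ), ∃ δ > (0 : ℝ),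
      ∀ ν, MemP2 ν → ∀ x' : EuclideanSpace ℝ (Fin d),
        W2 μ ν < ENNReal.ofReal δ → dist x x' < δ → ‖U x' ν - U x μ‖ < ε)
    (hint : ∀ μ, MemP2 μ → Integrable (fun x => ‖U x μ‖ ^ 2) μ)
    (hmono : ∀ μ ν, MemP2 μ → MemP2 ν →
      ∀ γ : Measure (EuclideanSpace ℝ (Fin d) × EuclideanSpace ℝ (Fin d)),
        IsCoupling γ μ ν →
        0 ≤ ∫ p, ⟪U p.1 μ - U p.2 ν, p.1 - p.2⟫ ∂γ) :
    ∀ μ, MemP2 μ → ∀ x y : EuclideanSpace ℝ (Fin d),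
      0 ≤ ⟪U x μ - U y μ, x - y⟫ := by
  intro μ hμ x y
  by_cases hxy : x = y
  · subst hxy; simp
  by_contra hI
  push_neg at hI
  haveI hprob := hμ.1
  set I : ℝ := ⟪U x μ - U y μ, x - y⟫ with hIdef
  have hn0 : 0 < ‖x - y‖ := norm_pos_iff.mpr (sub_ne_zero.mpr hxy)
  set n : ℝ := ‖x - y‖ with hndef
  set ε : ℝ := (-I) / (2 * n) with hεdef
  have hε : 0 < ε := div_pos (neg_pos.mpr hI) (by positivity)
  obtain ⟨δ₁, hδ₁, hc₁⟩ := hcont μ hμ x ε hε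
  obtain ⟨δ₂, hδ₂, hc₂⟩ := hcont μ hμ y ε hε
  set δ : ℝ := min δ₁ δ₂ with hδdef
  have hδ : 0 < δ := lt_min hδ₁ hδ₂
  set Cx : ℝ≥0∞ := ∫⁻ z, (‖z - x‖₊ : ℝ≥0∞) ^ 2 ∂μ with hCxdef
  set Cy : ℝ≥0∞ := ∫⁻ z, (‖z - y‖₊ : ℝ≥0∞) ^ 2 ∂μ with hCydef
  have hCx : Cx < ⊤ := my_lintegral_shift_lt_top μ hμ x
  have hCy : Cy < ⊤ := my_lintegral_shift_lt_top μ hμ y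
  set C : ℝ≥0∞ := Cx + Cy + 1 with hCdef
  have hC0 : C ≠ 0 := by simp [hCdef]
  have hCtop : C ≠ ⊤ := by
    simp only [hCdef]
    exact ENNReal.add_ne_top.mpr ⟨ENNReal.add_ne_top.mpr ⟨hCx.ne, hCy.ne⟩, ENNReal.one_ne_top⟩
  set b : ℝ≥0∞ := (ENNReal.ofReal δ) ^ 2 / C with hbdef
  have hδ0' : ENNReal.ofReal δ ≠ 0 := (ENNReal.ofReal_pos.mpr hδ).ne'
  have hb0 : b ≠ 0 := by
    simp only [hbdef]
    rw [ENNReal.div_ne_zero]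
    exact ⟨pow_ne_zero 2 hδ0', hCtop⟩
  have hbtop : b ≠ ⊤ :=
    (ENNReal.div_lt_top (by simp [ENNReal.pow_ne_top ENNReal.ofReal_ne_top]) hC0).ne
  set t : ℝ := min 1 (b.toReal / 2) with htdef
  have hbt : 0 < b.toReal := ENNReal.toReal_pos hb0 hbtop
  have ht0 : 0 < t := lt_min one_pos (half_pos hbt)
  have ht1 : t ≤ 1 := min_le_left _ _
  have htb : ENNReal.ofReal t < b := by
    calc ENNReal.ofReal t ≤ ENNReal.ofReal (b.toReal / 2) :=
          ENNReal.ofReal_le_ofReal (min_le_right _ _)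
      _ < ENNReal.ofReal b.toReal := by
          rw [ENNReal.ofReal_lt_ofReal_iff hbt]; linarith
      _ = b := ENNReal.ofReal_toReal hbtop
  have hmul : ENNReal.ofReal t * C < (ENNReal.ofReal δ) ^ 2 := by
    calc ENNReal.ofReal t * C < b * C :=
          ENNReal.mul_lt_mul_left hC0 hCtop htb
      _ = (ENNReal.ofReal δ) ^ 2 := by
          rw [hbdef, ENNReal.div_mul_cancel hC0 hCtop]
  have hsq : ((ENNReal.ofReal δ) ^ 2) ^ ((1:ℝ)/2) = ENNReal.ofReal δ := by
    rw [← ENNReal.rpow_natCast (ENNReal.ofReal δ) 2, ← ENNReal.rpow_mul]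
    norm_num
  -- the two perturbed measures
  set μt : Measure (EuclideanSpace ℝ (Fin d)) :=
    ENNReal.ofReal (1 - t) • μ + ENNReal.ofReal t • Measure.dirac x with hμtdef
  set νt : Measure (EuclideanSpace ℝ (Fin d)) :=
    ENNReal.ofReal (1 - t) • μ + ENNReal.ofReal t • Measure.dirac y with hνtdef
  have hμt : MemP2 μt := my_memP2_mix μ hμ ht0.le ht1 x
  have hνt : MemP2 νt := my_memP2_mix μ hμ ht0.le ht1 y
  have hW2x : W2 μ μt < ENNReal.ofReal δ₁ := by
    refine lt_of_le_of_lt (my_W2_mix_le μ hprob ht0.le ht1 x) ?_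
    have hlt : ENNReal.ofReal t * Cx < (ENNReal.ofReal δ) ^ 2 :=
      lt_of_le_of_lt (mul_le_mul_right (by simp [hCdef, le_add_right]) _) hmul
    calc (ENNReal.ofReal t * Cx) ^ ((1:ℝ)/2)
        < ((ENNReal.ofReal δ) ^ 2) ^ ((1:ℝ)/2) := ENNReal.rpow_lt_rpow hlt (by norm_num)
      _ = ENNReal.ofReal δ := hsq
      _ ≤ ENNReal.ofReal δ₁ := ENNReal.ofReal_le_ofReal (min_le_left _ _)
  have hW2y : W2 μ νt < ENNReal.ofReal δ₂ := by
    refine lt_of_le_of_lt (my_W2_mix_le μ hprob ht0.le ht1 y) ?_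
    have hlt : ENNReal.ofReal t * Cy < (ENNReal.ofReal δ) ^ 2 :=
      lt_of_le_of_lt (mul_le_mul_right (by simp [hCdef, le_add_right]) _) hmul
    calc (ENNReal.ofReal t * Cy) ^ ((1:ℝ)/2)
        < ((ENNReal.ofReal δ) ^ 2) ^ ((1:ℝ)/2) := ENNReal.rpow_lt_rpow hlt (by norm_num)
      _ = ENNReal.ofReal δ := hsq
      _ ≤ ENNReal.ofReal δ₂ := ENNReal.ofReal_le_ofReal (min_le_right _ _)
  have hA : ‖U x μt - U x μ‖ < ε := hc₁ μt hμt x hW2x (by simpa using hδ₁)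
  have hB : ‖U y νt - U y μ‖ < ε := hc₂ νt hνt y hW2y (by simpa using hδ₂)
  -- monotonicity along the coupling
  have hF : 0 ≤ ⟪U x μt - U y νt, x - y⟫ := by
    have h := hmono μt νt hμt hνt _ (my_coupling_mix μ hprob x y)
    rw [my_integral_mix (fun p => ⟪U p.1 μt - U p.2 νt, p.1 - p.2⟫)
      (fun z => by simp) μ ht0.le x y] at h
    exact nonneg_of_mul_nonneg_right h ht0
  -- decomposition
  have hdecomp : I = ⟪U x μt - U y νt, x - y⟫
      + ⟪U x μ - U x μt, x - y⟫ + ⟪U y νt - U y μ, x - y⟫ := by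
    rw [hIdef]
    simp only [inner_sub_left]
    ring
  have habs1 : |⟪U x μ - U x μt, x - y⟫| ≤ ‖U x μ - U x μt‖ * n :=
    abs_real_inner_le_norm _ _
  have habs2 : |⟪U y νt - U y μ, x - y⟫| ≤ ‖U y νt - U y μ‖ * n :=
    abs_real_inner_le_norm _ _
  have hnorm1 : ‖U x μ - U x μt‖ < ε := by rwa [norm_sub_rev]
  have hεn : ε * n = -I / 2 := by
    rw [hεdef]; field_simp
  have h1 : -(ε * n) < ⟪U x μ - U x μt, x - y⟫ := by
    have := abs_le.mp habs1
    nlinarith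
  have h2 : -(ε * n) < ⟪U y νt - U y μ, x - y⟫ := by
    have := abs_le.mp habs2
    nlinarith
  linarith
end
end

section
/- Let β > 0 and let W : ℝ^d × P₂(ℝ^d) → ℝ^d be continuous (where P₂(ℝ^d) is equipped with the 2-Wasserstein distance) such that for all μ, ν ∈ P₂(ℝ^d) and every coupling γ of μ and ν, ∫ (W(x,μ) − W(y,ν)) · (x − y) γ(dx,dy) ≥ β ∫ ‖W(x,μ) − W(y,ν)‖² γ(dx,dy). Then W is (1/β)-Lipschitz in the space variable uniformly in the measure: for every μ ∈ P₂(ℝ^d) and all x, y ∈ ℝ^d, ‖W(x,μ) − W(y,μ)‖ ≤ (1/β) ‖x − y‖. -/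
open MeasureTheory Set
open scoped ENNReal RealInnerProductSpace NNReal

noncomputable section

lemma integrable_dirac_of_sm {α F : Type*} [MeasurableSpace α] [NormedAddCommGroup F]
    {f : α → F} (hf : StronglyMeasurable f) (a : α) : Integrable f (Measure.dirac a) := by
  refine ⟨hf.aestronglyMeasurable, ?_⟩
  rw [HasFiniteIntegral, lintegral_dirac' a hf.enorm]
  exact enorm_lt_top

lemma W2_self {d : ℕ} (μ : Measure (EuclideanSpace ℝ (Fin d))) : W2 μ μ = 0 := by
  have hT : Measurable fun z : EuclideanSpace ℝ (Fin d) => (z, z) :=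
    measurable_id.prodMk measurable_id
  have hc : IsCoupling (μ.map fun z => (z, z)) μ μ := by
    constructor
    · rw [Measure.map_map measurable_fst hT]; simp [Function.comp_def]
    · rw [Measure.map_map measurable_snd hT]; simp [Function.comp_def]
  refine le_antisymm ?_ (zero_le)
  refine le_trans (iInf₂_le (μ.map fun z => (z, z)) hc) ?_
  have : (∫⁻ p : EuclideanSpace ℝ (Fin d) × EuclideanSpace ℝ (Fin d),
      (‖p.1 - p.2‖₊ : ℝ≥0∞) ^ 2 ∂(μ.map fun z => (z, z))) = 0 := by
    rw [lintegral_map (by measurability) hT]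
    simp
  rw [this]
  simp [ENNReal.zero_rpow_of_pos]

set_option maxHeartbeats 1000000 in
/-- **Lemma 4.7, second claim.** If `W : ℝ^d × P₂(ℝ^d) → ℝ^d` is continuous (w.r.t.
the `W₂` distance in the measure variable) and satisfies the strong `L²`-monotonicity
inequality with constant `β > 0`, then `W` is `(1/β)`-Lipschitz in the space variable,
uniformly in the measure. -/
theorem strong_L2_monotone_lipschitz_in_space (d : ℕ) (β : ℝ) (hβ : 0 < β)
    (W : EuclideanSpace ℝ (Fin d) → Measure (EuclideanSpace ℝ (Fin d)) →
      EuclideanSpace ℝ (Fin d))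
    (hcont : ∀ μ, MemP2 μ → ∀ x : EuclideanSpace ℝ (Fin d), ∀ ε > (0 : ℝ), ∃ δ > (0 : ℝ),
      ∀ ν, MemP2 ν → ∀ x' : EuclideanSpace ℝ (Fin d),
        W2 μ ν < ENNReal.ofReal δ → dist x x' < δ → ‖W x' ν - W x μ‖ < ε)
    (hint : ∀ μ, MemP2 μ → Integrable (fun x => ‖W x μ‖ ^ 2) μ)
    (hmono : ∀ μ ν, MemP2 μ → MemP2 ν →
      ∀ γ : Measure (EuclideanSpace ℝ (Fin d) × EuclideanSpace ℝ (Fin d)),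
        IsCoupling γ μ ν →
        β * ∫ p, ‖W p.1 μ - W p.2 ν‖ ^ 2 ∂γ ≤
          ∫ p, ⟪W p.1 μ - W p.2 ν, p.1 - p.2⟫ ∂γ) :
    ∀ μ, MemP2 μ → ∀ x y : EuclideanSpace ℝ (Fin d),
      ‖W x μ - W y μ‖ ≤ (1 / β) * ‖x - y‖ := by
  -- continuity of `W · ν`
  have hWc : ∀ ν, MemP2 ν → Continuous fun z => W z ν := by
    intro ν hν
    rw [Metric.continuous_iff]
    intro b ε hε
    obtain ⟨δ, hδ, h⟩ := hcont ν hν b ε hε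
    refine ⟨δ, hδ, fun a ha => ?_⟩
    rw [dist_eq_norm]
    exact h ν hν a (by rw [W2_self]; exact ENNReal.ofReal_pos.mpr hδ) (by rwa [dist_comm])
  intro μ hμ x y
  haveI : IsProbabilityMeasure μ := hμ.1
  have hT : Measurable fun z : EuclideanSpace ℝ (Fin d) => (z, z) :=
    measurable_id.prodMk measurable_id
  refine le_of_forall_pos_le_add ?_
  intro η hη
  obtain ⟨δ₁, hδ₁, h₁⟩ := hcont μ hμ x (η / 2) (by positivity)
  obtain ⟨δ₂, hδ₂, h₂⟩ := hcont μ hμ y (η / 2) (by positivity)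
  set δ : ℝ := min δ₁ δ₂ with hδdef
  have hδ : 0 < δ := lt_min hδ₁ hδ₂
  -- finite second moments around a point
  have hmom : ∀ a : EuclideanSpace ℝ (Fin d), Integrable (fun z => ‖z - a‖ ^ 2) μ := by
    intro a
    refine Integrable.mono' ((hμ.2.const_mul 2).add (integrable_const (2 * ‖a‖ ^ 2)))
      (((continuous_id.sub continuous_const).norm.pow 2).aestronglyMeasurable) ?_
    filter_upwards with z
    simp only [Pi.add_apply]
    rw [Real.norm_eq_abs, abs_of_nonneg (by positivity)]
    nlinarith [pow_le_pow_left₀ (norm_nonneg (z - a)) (norm_sub_le z a) 2,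
      sq_nonneg (‖z‖ - ‖a‖)]
  have hmomL : ∀ a : EuclideanSpace ℝ (Fin d),
      (∫⁻ z, (‖z - a‖₊ : ℝ≥0∞) ^ 2 ∂μ) < ⊤ := by
    intro a
    have h := (hmom a).2
    rw [HasFiniteIntegral] at h
    have : ∀ z : EuclideanSpace ℝ (Fin d),
        (‖z - a‖₊ : ℝ≥0∞) ^ 2 = (‖(‖z - a‖ ^ 2 : ℝ)‖₊ : ℝ≥0∞) := by
      intro z
      rw [nnnorm_pow, nnnorm_norm, ENNReal.coe_pow]
    simpa only [this, enorm_eq_nnnorm] using h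
  set Cx : ℝ≥0∞ := ∫⁻ z, (‖z - x‖₊ : ℝ≥0∞) ^ 2 ∂μ with hCx
  set Cy : ℝ≥0∞ := ∫⁻ z, (‖z - y‖₊ : ℝ≥0∞) ^ 2 ∂μ with hCy
  set M : ℝ := Cx.toReal ⊔ Cy.toReal with hM
  have hM0 : 0 ≤ M := le_trans ENNReal.toReal_nonneg le_sup_left
  set ε : ℝ := min (1 / 2) (δ ^ 2 / (2 * (M + 1))) with hεdef
  have hε0 : 0 < ε := lt_min (by norm_num) (by positivity)
  have hε1 : ε ≤ 1 / 2 := min_le_left _ _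
  have hεle : ε ≤ δ ^ 2 / (2 * (M + 1)) := min_le_right _ _
  have h1ε : (0 : ℝ) < 1 - ε := by linarith
  -- key smallness estimate
  have hsmall : ∀ C : ℝ≥0∞, C ≠ ⊤ → C.toReal ≤ M →
      (ENNReal.ofReal ε * C) ^ ((1 : ℝ) / 2) < ENNReal.ofReal δ := by
    intro C hCt hCM
    have h1 : ENNReal.ofReal ε * C = ENNReal.ofReal (ε * C.toReal) := by
      rw [ENNReal.ofReal_mul hε0.le, ENNReal.ofReal_toReal hCt]
    have h2 : ε * C.toReal < δ ^ 2 := by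
      have hC0 : 0 ≤ C.toReal := ENNReal.toReal_nonneg
      have : ε * C.toReal ≤ δ ^ 2 / (2 * (M + 1)) * M :=
        mul_le_mul hεle hCM hC0 (by positivity)
      have h3 : δ ^ 2 / (2 * (M + 1)) * M < δ ^ 2 := by
        rw [div_mul_eq_mul_div, div_lt_iff₀ (by positivity)]
        nlinarith [sq_nonneg δ]
      linarith
    have h4 : ENNReal.ofReal (ε * C.toReal) < ENNReal.ofReal (δ ^ 2) :=
      ENNReal.ofReal_lt_ofReal_iff (by positivity) |>.mpr h2
    calc (ENNReal.ofReal ε * C) ^ ((1 : ℝ) / 2)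
        < ENNReal.ofReal (δ ^ 2) ^ ((1 : ℝ) / 2) := by
          rw [h1]; exact ENNReal.rpow_lt_rpow h4 (by norm_num)
      _ = ENNReal.ofReal δ := by
          rw [ENNReal.ofReal_rpow_of_pos (by positivity)]
          congr 1
          rw [← Real.rpow_natCast δ 2, ← Real.rpow_mul hδ.le]
          norm_num
  -- the perturbed measures
  set a : ℝ≥0∞ := ENNReal.ofReal (1 - ε) with ha
  set b : ℝ≥0∞ := ENNReal.ofReal ε with hb
  have hab : a + b = 1 := by
    rw [ha, hb, ← ENNReal.ofReal_add h1ε.le hε0.le]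
    norm_num
  have ha0 : a ≠ 0 := (ENNReal.ofReal_pos.mpr h1ε).ne'
  have hat : a ≠ ⊤ := ENNReal.ofReal_ne_top
  have hbt : b ≠ ⊤ := ENNReal.ofReal_ne_top
  set μ₁ : Measure (EuclideanSpace ℝ (Fin d)) := a • μ + b • Measure.dirac x with hμ₁def
  set μ₂ : Measure (EuclideanSpace ℝ (Fin d)) := a • μ + b • Measure.dirac y with hμ₂def
  have hnorm2sm : StronglyMeasurable fun z : EuclideanSpace ℝ (Fin d) => ‖z‖ ^ 2 :=
    (continuous_norm.pow 2).stronglyMeasurable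
  have hmix2 : ∀ c : EuclideanSpace ℝ (Fin d), MemP2 (a • μ + b • Measure.dirac c) := by
    intro c
    constructor
    · constructor
      simp [Measure.add_apply, Measure.smul_apply, smul_eq_mul, measure_univ, hab]
    · exact Integrable.add_measure ((hμ.2).smul_measure hat)
        ((integrable_dirac_of_sm hnorm2sm c).smul_measure hbt)
  have hμ₁2 : MemP2 μ₁ := hmix2 x
  have hμ₂2 : MemP2 μ₂ := hmix2 y
  -- W2 bound for the perturbed measures
  have hW2 : ∀ c : EuclideanSpace ℝ (Fin d),
      W2 μ (a • μ + b • Measure.dirac c) ≤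
        (b * ∫⁻ z, (‖z - c‖₊ : ℝ≥0∞) ^ 2 ∂μ) ^ ((1 : ℝ) / 2) := by
    intro c
    have hTc : Measurable fun z : EuclideanSpace ℝ (Fin d) => (z, c) :=
      measurable_id.prodMk measurable_const
    set γ' : Measure (EuclideanSpace ℝ (Fin d) × EuclideanSpace ℝ (Fin d)) :=
      a • (μ.map fun z => (z, z)) + b • (μ.map fun z => (z, c)) with hγ'
    have hcoup : IsCoupling γ' μ (a • μ + b • Measure.dirac c) := by
      constructor
      · rw [hγ', Measure.map_add _ _ measurable_fst, Measure.map_smul, Measure.map_smul,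
          Measure.map_map measurable_fst hT, Measure.map_map measurable_fst hTc]
        simp only [Function.comp_def]
        rw [Measure.map_id']
        rw [← add_smul, hab, one_smul]
      · rw [hγ', Measure.map_add _ _ measurable_snd, Measure.map_smul, Measure.map_smul,
          Measure.map_map measurable_snd hT, Measure.map_map measurable_snd hTc]
        simp only [Function.comp_def]
        rw [Measure.map_id', Measure.map_const, measure_univ, one_smul]
    have hcostm : Measurable fun p : EuclideanSpace ℝ (Fin d) × EuclideanSpace ℝ (Fin d) =>
        ((‖p.1 - p.2‖₊ : ℝ≥0∞)) ^ 2 :=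
      ((measurable_fst.sub measurable_snd).nnnorm.coe_nnreal_ennreal).pow_const 2
    have hcost : (∫⁻ p, (‖p.1 - p.2‖₊ : ℝ≥0∞) ^ 2 ∂γ') =
        b * ∫⁻ z, (‖z - c‖₊ : ℝ≥0∞) ^ 2 ∂μ := by
      rw [hγ', lintegral_add_measure, lintegral_smul_measure, lintegral_smul_measure,
        lintegral_map hcostm hT, lintegral_map hcostm hTc]
      simp
    exact le_trans (iInf₂_le γ' hcoup) (by rw [hcost])
  have hW2x : W2 μ μ₁ < ENNReal.ofReal δ :=
    lt_of_le_of_lt (hW2 x) (hsmall Cx (hmomL x).ne (le_sup_left))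
  have hW2y : W2 μ μ₂ < ENNReal.ofReal δ :=
    lt_of_le_of_lt (hW2 y) (hsmall Cy (hmomL y).ne (le_sup_right))
  -- the coupling for hmono
  set γε : Measure (EuclideanSpace ℝ (Fin d) × EuclideanSpace ℝ (Fin d)) :=
    a • (μ.map fun z => (z, z)) + b • Measure.dirac (x, y) with hγε
  have hcoupε : IsCoupling γε μ₁ μ₂ := by
    constructor
    · rw [hγε, Measure.map_add _ _ measurable_fst, Measure.map_smul, Measure.map_smul,
        Measure.map_map measurable_fst hT, Measure.map_dirac' measurable_fst]
      simp only [Function.comp_def]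
      rw [Measure.map_id']
    · rw [hγε, Measure.map_add _ _ measurable_snd, Measure.map_smul, Measure.map_smul,
        Measure.map_map measurable_snd hT, Measure.map_dirac' measurable_snd]
      simp only [Function.comp_def]
      rw [Measure.map_id']
  set Δ : EuclideanSpace ℝ (Fin d) := W x μ₁ - W y μ₂ with hΔ
  set f : EuclideanSpace ℝ (Fin d) × EuclideanSpace ℝ (Fin d) → ℝ :=
    fun p => ‖W p.1 μ₁ - W p.2 μ₂‖ ^ 2 with hf
  set g : EuclideanSpace ℝ (Fin d) × EuclideanSpace ℝ (Fin d) → ℝ :=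
    fun p => ⟪W p.1 μ₁ - W p.2 μ₂, p.1 - p.2⟫ with hg
  have hfc : Continuous f :=
    ((((hWc μ₁ hμ₁2).comp continuous_fst).sub ((hWc μ₂ hμ₂2).comp continuous_snd)).norm).pow 2
  have hgc : Continuous g :=
    Continuous.inner
      (((hWc μ₁ hμ₁2).comp continuous_fst).sub ((hWc μ₂ hμ₂2).comp continuous_snd))
      (continuous_fst.sub continuous_snd)
  -- integrability of the L² part
  have hWint : ∀ (ν : Measure (EuclideanSpace ℝ (Fin d))), MemP2 (a • μ + b • ν) →
      Integrable (fun z => ‖W z (a • μ + b • ν)‖ ^ 2) μ := by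
    intro ν hν
    have h := hint _ hν
    have h' := h.left_of_add_measure
    exact (integrable_smul_measure ha0 hat).mp h'
  have hWμ₁int : Integrable (fun z => ‖W z μ₁‖ ^ 2) μ := hWint _ hμ₁2
  have hWμ₂int : Integrable (fun z => ‖W z μ₂‖ ^ 2) μ := hWint _ hμ₂2
  have hdiagc : Continuous fun z : EuclideanSpace ℝ (Fin d) => (z, z) :=
    continuous_id.prodMk continuous_id
  have hfdiag : Integrable (fun z => f (z, z)) μ := by
    refine Integrable.mono' ((hWμ₁int.const_mul 2).add (hWμ₂int.const_mul 2))
      ((hfc.comp hdiagc).aestronglyMeasurable) ?_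
    filter_upwards with z
    simp only [hf, Function.comp, Pi.add_apply]
    rw [Real.norm_eq_abs, abs_of_nonneg (by positivity)]
    nlinarith [pow_le_pow_left₀ (norm_nonneg (W z μ₁ - W z μ₂))
      (norm_sub_le (W z μ₁) (W z μ₂)) 2, sq_nonneg (‖W z μ₁‖ - ‖W z μ₂‖)]
  have hfint1 : Integrable f (a • Measure.map (fun z => (z, z)) μ) := by
    refine Integrable.smul_measure ?_ hat
    rw [integrable_map_measure hfc.aestronglyMeasurable hT.aemeasurable]
    exact hfdiag
  have hfint2 : Integrable f (b • Measure.dirac (x, y)) :=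
    (integrable_dirac_of_sm hfc.stronglyMeasurable _).smul_measure hbt
  have hgdiag0 : (fun z : EuclideanSpace ℝ (Fin d) => g (z, z)) = fun _ => (0 : ℝ) := by
    funext z
    simp [hg]
  have hgint1 : Integrable g (a • Measure.map (fun z => (z, z)) μ) := by
    refine Integrable.smul_measure ?_ hat
    rw [integrable_map_measure hgc.aestronglyMeasurable hT.aemeasurable]
    show Integrable (fun z => g (z, z)) μ
    rw [hgdiag0]
    exact integrable_const 0
  have hgint2 : Integrable g (b • Measure.dirac (x, y)) :=
    (integrable_dirac_of_sm hgc.stronglyMeasurable _).smul_measure hbt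
  -- compute the two integrals
  have hfeq : ∫ p, f p ∂γε = (1 - ε) * (∫ z, f (z, z) ∂μ) + ε * ‖Δ‖ ^ 2 := by
    rw [hγε, integral_add_measure hfint1 hfint2, integral_smul_measure, integral_smul_measure,
      integral_map hT.aemeasurable hfc.aestronglyMeasurable, integral_dirac]
    rw [ha, hb, ENNReal.toReal_ofReal h1ε.le, ENNReal.toReal_ofReal hε0.le]
    simp [hf, hΔ, smul_eq_mul]
  have hgeq : ∫ p, g p ∂γε = ε * ⟪Δ, x - y⟫ := by
    rw [hγε, integral_add_measure hgint1 hgint2, integral_smul_measure, integral_smul_measure,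
      integral_map hT.aemeasurable hgc.aestronglyMeasurable, integral_dirac]
    rw [show (∫ z, g (z, z) ∂μ) = 0 by rw [hgdiag0]; simp]
    rw [ha, hb, ENNReal.toReal_ofReal h1ε.le, ENNReal.toReal_ofReal hε0.le]
    simp [hg, hΔ, smul_eq_mul]
  have hIdiag : 0 ≤ ∫ z, f (z, z) ∂μ := integral_nonneg fun z => by positivity
  have hm := hmono μ₁ μ₂ hμ₁2 hμ₂2 γε hcoupε
  rw [show (∫ p, ‖W p.1 μ₁ - W p.2 μ₂‖ ^ 2 ∂γε) = ∫ p, f p ∂γε from rfl,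
    show (∫ p, ⟪W p.1 μ₁ - W p.2 μ₂, p.1 - p.2⟫ ∂γε) = ∫ p, g p ∂γε from rfl,
    hfeq, hgeq] at hm
  -- pointwise bound for Δ
  have hΔbound : ‖Δ‖ ≤ 1 / β * ‖x - y‖ := by
    have h5 : β * ‖Δ‖ ^ 2 ≤ ⟪Δ, x - y⟫ := by
      have hp : 0 ≤ β * ((1 - ε) * (∫ z, f (z, z) ∂μ)) :=
        mul_nonneg hβ.le (mul_nonneg h1ε.le hIdiag)
      have hexp : β * ((1 - ε) * (∫ z, f (z, z) ∂μ) + ε * ‖Δ‖ ^ 2) =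
          β * ((1 - ε) * (∫ z, f (z, z) ∂μ)) + ε * (β * ‖Δ‖ ^ 2) := by ring
      have h9 : ε * (β * ‖Δ‖ ^ 2) ≤ ε * ⟪Δ, x - y⟫ := by
        rw [hexp] at hm; linarith
      exact le_of_mul_le_mul_left h9 hε0
    have h6 : ⟪Δ, x - y⟫ ≤ ‖Δ‖ * ‖x - y‖ := real_inner_le_norm Δ (x - y)
    rcases eq_or_lt_of_le (norm_nonneg Δ) with hz | hz
    · rw [← hz]; positivity
    · have h7 : β * ‖Δ‖ ≤ ‖x - y‖ := by
        have h8 : (β * ‖Δ‖) * ‖Δ‖ ≤ ‖x - y‖ * ‖Δ‖ := by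
          calc (β * ‖Δ‖) * ‖Δ‖ = β * ‖Δ‖ ^ 2 := by ring
            _ ≤ ⟪Δ, x - y⟫ := h5
            _ ≤ ‖Δ‖ * ‖x - y‖ := h6
            _ = ‖x - y‖ * ‖Δ‖ := by ring
        exact le_of_mul_le_mul_right h8 hz
      calc ‖Δ‖ = 1 / β * (β * ‖Δ‖) := by field_simp
        _ ≤ 1 / β * ‖x - y‖ := by
            apply mul_le_mul_of_nonneg_left h7 (by positivity)
  -- continuity transfer
  have hx : ‖W x μ₁ - W x μ‖ < η / 2 :=
    h₁ μ₁ hμ₁2 x (lt_of_lt_of_le hW2x (ENNReal.ofReal_le_ofReal (min_le_left _ _)))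
      (by simpa using hδ₁)
  have hy : ‖W y μ₂ - W y μ‖ < η / 2 :=
    h₂ μ₂ hμ₂2 y (lt_of_lt_of_le hW2y (ENNReal.ofReal_le_ofReal (min_le_right _ _)))
      (by simpa using hδ₂)
  have hdecomp : W x μ - W y μ = (W x μ - W x μ₁) + Δ + (W y μ₂ - W y μ) := by
    rw [hΔ]; abel
  calc ‖W x μ - W y μ‖ ≤ ‖W x μ - W x μ₁‖ + ‖Δ‖ + ‖W y μ₂ - W y μ‖ := by
        rw [hdecomp]; exact norm_add₃_le
    _ ≤ η / 2 + (1 / β * ‖x - y‖) + η / 2 := by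
        rw [norm_sub_rev (W x μ)]
        exact add_le_add (add_le_add hx.le hΔbound) hy.le
    _ = 1 / β * ‖x - y‖ + η := by ring
end
end

section
/- Let H : ℝ^d × ℝ^d → ℝ, written H(x,p), be continuously differentiable, and set F(x,p) = ∇_p H(x,p) and G(x,p) = −∇_x H(x,p). Assume: (a) for all (x,y,p,q) ∈ (ℝ^d)^4, (F(x,p) − F(y,q)) · (p − q) + (G(x,p) − G(y,q)) · (x − y) ≥ 0; (b) there exists α_H > 0 such that for every x ∈ ℝ^d the map p ↦ H(x,p) − (α_H/2)‖p‖² is convex (i.e. H is α_H-strongly convex in p, uniformly in x). Then for all (x,y,p,q) ∈ (ℝ^d)^4, (F(x,p) − F(y,q)) · (p − q) + (G(x,p) − G(y,q)) · (x − y) ≥ α_H ‖p − q‖². -/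
open scoped RealInnerProductSpace

noncomputable section

/-- Auxiliary: a `C¹` function that is `α`-strongly convex satisfies the two-sided
gradient inequalities along a segment. -/
lemma strong_slice {d : ℕ} (f : EuclideanSpace ℝ (Fin d) → ℝ) (hf : ContDiff ℝ 1 f)
    (α : ℝ) (hconv : ConvexOn ℝ Set.univ (fun p => f p - α / 2 * ‖p‖ ^ 2))
    (p q : EuclideanSpace ℝ (Fin d)) :
    ⟪gradient f q, p - q⟫ + α / 2 * ‖p - q‖ ^ 2 ≤ f p - f q ∧
      f p - f q ≤ ⟪gradient f p, p - q⟫ - α / 2 * ‖p - q‖ ^ 2 := by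
  set l : ℝ → EuclideanSpace ℝ (Fin d) := fun t => t • (p - q) + q with hl_def
  have hl : ∀ t : ℝ, HasDerivAt l (p - q) t := by
    intro t
    simpa [hl_def] using ((hasDerivAt_id t).smul_const (p - q)).add_const q
  have hfl : ∀ t : ℝ, HasDerivAt (fun t => f (l t)) ⟪gradient f (l t), p - q⟫ t := by
    intro t
    have hg : HasGradientAt f (gradient f (l t)) (l t) :=
      ((hf.differentiable one_ne_zero) (l t)).hasGradientAt
    have := hg.hasFDerivAt.comp_hasDerivAt t (hl t)
    simp [InnerProductSpace.toDual_apply_apply] at this ⊢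
    exact this
  have hnl : ∀ t : ℝ, HasDerivAt (fun t => ‖l t‖ ^ 2) (2 * ⟪l t, p - q⟫) t := by
    intro t
    have h := (hl t).inner ℝ (hl t)
    have heq : (fun t => ⟪l t, l t⟫) = fun t => ‖l t‖ ^ 2 := by
      funext s
      rw [real_inner_self_eq_norm_sq]
    rw [heq] at h
    have e : ⟪l t, p - q⟫ + ⟪p - q, l t⟫ = 2 * ⟪l t, p - q⟫ := by
      rw [real_inner_comm (p - q)]
      ring
    rw [e] at h
    exact h
  set ψ : ℝ → ℝ := fun t => f (l t) - α / 2 * ‖l t‖ ^ 2 with hψ_def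
  have hψ : ∀ t : ℝ, HasDerivAt ψ
      (⟪gradient f (l t), p - q⟫ - α / 2 * (2 * ⟪l t, p - q⟫)) t := by
    intro t
    exact (hfl t).sub ((hnl t).const_mul (α / 2))
  have hcψ : ConvexOn ℝ Set.univ ψ := by
    have h := hconv.comp_affineMap (AffineMap.lineMap q p : ℝ →ᵃ[ℝ] EuclideanSpace ℝ (Fin d))
    have heq : ((fun p' => f p' - α / 2 * ‖p'‖ ^ 2) ∘
        (AffineMap.lineMap q p : ℝ →ᵃ[ℝ] EuclideanSpace ℝ (Fin d))) = ψ := by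
      funext t
      simp [Function.comp, AffineMap.lineMap_apply, hψ_def, hl_def]
    rw [heq] at h
    simpa using h
  have hslope : slope ψ 0 1 = ψ 1 - ψ 0 := by
    simp [slope_def_field]
  have h1 : ⟪gradient f (l 0), p - q⟫ - α / 2 * (2 * ⟪l 0, p - q⟫) ≤ ψ 1 - ψ 0 := by
    have := hcψ.le_slope_of_hasDerivAt (Set.mem_univ 0) (Set.mem_univ 1) one_pos (hψ 0)
    rwa [hslope] at this
  have h2 : ψ 1 - ψ 0 ≤ ⟪gradient f (l 1), p - q⟫ - α / 2 * (2 * ⟪l 1, p - q⟫) := by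
    have := hcψ.slope_le_of_hasDerivAt (Set.mem_univ 0) (Set.mem_univ 1) one_pos (hψ 1)
    rwa [hslope] at this
  have hl0 : l 0 = q := by simp [hl_def]
  have hl1 : l 1 = p := by simp [hl_def]
  simp only [hl0, hl1] at h1 h2
  have hψ1 : ψ 1 = f p - α / 2 * ‖p‖ ^ 2 := by rw [hψ_def]; simp [hl1]
  have hψ0 : ψ 0 = f q - α / 2 * ‖q‖ ^ 2 := by rw [hψ_def]; simp [hl0]
  rw [hψ1, hψ0] at h1 h2
  have key1 : ‖p - q‖ ^ 2 = ‖p‖ ^ 2 - 2 * ⟪q, p - q⟫ - ‖q‖ ^ 2 := by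
    have e1 : ⟪q, p - q⟫ = ⟪q, p⟫ - ‖q‖ ^ 2 := by
      rw [inner_sub_right, real_inner_self_eq_norm_sq]
    have e2 : ‖p - q‖ ^ 2 = ‖p‖ ^ 2 - 2 * ⟪p, q⟫ + ‖q‖ ^ 2 := norm_sub_sq_real p q
    rw [e1, e2, real_inner_comm p q]
    ring
  have key2 : ‖p - q‖ ^ 2 = 2 * ⟪p, p - q⟫ - ‖p‖ ^ 2 + ‖q‖ ^ 2 := by
    have e1 : ⟪p, p - q⟫ = ‖p‖ ^ 2 - ⟪p, q⟫ := by
      rw [inner_sub_right, real_inner_self_eq_norm_sq]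
    have e2 : ‖p - q‖ ^ 2 = ‖p‖ ^ 2 - 2 * ⟪p, q⟫ + ‖q‖ ^ 2 := norm_sub_sq_real p q
    rw [e1, e2]
    ring
  have k1 : α / 2 * ‖p - q‖ ^ 2 =
      α / 2 * ‖p‖ ^ 2 - α * ⟪q, p - q⟫ - α / 2 * ‖q‖ ^ 2 := by
    rw [key1]; ring
  have k2 : α / 2 * ‖p - q‖ ^ 2 =
      α * ⟪p, p - q⟫ - α / 2 * ‖p‖ ^ 2 + α / 2 * ‖q‖ ^ 2 := by
    rw [key2]; ring
  constructor
  · linarith [h1, k1]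
  · linarith [h2, k2]

/-- Auxiliary: a `C¹` function whose directional derivative along the segment from `x` to `y`
is antitone (in the parameter) satisfies the two-sided concavity-type gradient estimates. -/
lemma concave_dir {d : ℕ} (f : EuclideanSpace ℝ (Fin d) → ℝ) (hf : ContDiff ℝ 1 f)
    (x y : EuclideanSpace ℝ (Fin d))
    (hanti : ∀ s t : ℝ, s ≤ t →
      ⟪gradient f (t • (y - x) + x), y - x⟫ ≤ ⟪gradient f (s • (y - x) + x), y - x⟫) :
    f y - f x ≤ ⟪gradient f x, y - x⟫ ∧ ⟪gradient f y, y - x⟫ ≤ f y - f x := by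
  set l : ℝ → EuclideanSpace ℝ (Fin d) := fun t => t • (y - x) + x with hl_def
  have hl : ∀ t : ℝ, HasDerivAt l (y - x) t := by
    intro t
    simpa [hl_def] using ((hasDerivAt_id t).smul_const (y - x)).add_const x
  set φ : ℝ → ℝ := fun t => f (l t) with hφ_def
  have hφ : ∀ t : ℝ, HasDerivAt φ ⟪gradient f (l t), y - x⟫ t := by
    intro t
    have hg : HasGradientAt f (gradient f (l t)) (l t) :=
      ((hf.differentiable one_ne_zero) (l t)).hasGradientAt
    have := hg.hasFDerivAt.comp_hasDerivAt t (hl t)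
    simp [InnerProductSpace.toDual_apply_apply] at this ⊢
    exact this
  have hderiv : deriv φ = fun t => ⟪gradient f (l t), y - x⟫ := by
    funext t
    exact (hφ t).deriv
  have hconc : ConcaveOn ℝ Set.univ φ := by
    apply Antitone.concaveOn_univ_of_deriv
    · exact fun t => (hφ t).differentiableAt
    · rw [hderiv]
      intro s t hst
      exact hanti s t hst
  have hslope : slope φ 0 1 = φ 1 - φ 0 := by
    simp [slope_def_field]
  have hl0 : l 0 = x := by simp [hl_def]
  have hl1 : l 1 = y := by simp [hl_def]
  have hφ1 : φ 1 = f y := by rw [hφ_def]; simp [hl1]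
  have hφ0 : φ 0 = f x := by rw [hφ_def]; simp [hl0]
  constructor
  · have := hconc.slope_le_of_hasDerivAt (Set.mem_univ 0) (Set.mem_univ 1) one_pos (hφ 0)
    rw [hslope, hφ1, hφ0, hl0] at this
    exact this
  · have := hconc.le_slope_of_hasDerivAt (Set.mem_univ 0) (Set.mem_univ 1) one_pos (hφ 1)
    rw [hslope, hφ1, hφ0, hl1] at this
    exact this

/-- **Lemma (Section 4.2).** If `F = ∇_p H` and `G = −∇_x H` for a `C¹` Hamiltonian
`H(x,p)` that is `α_H`-strongly convex in `p` uniformly in `x`, then joint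
monotonicity of `(F,G)` upgrades to strong joint monotonicity in `p`:
`(F(x,p) − F(y,q))·(p − q) + (G(x,p) − G(y,q))·(x − y) ≥ α_H ‖p − q‖²`. -/
theorem joint_monotone_gradients_strongly_monotone (d : ℕ)
    (H : EuclideanSpace ℝ (Fin d) → EuclideanSpace ℝ (Fin d) → ℝ)
    (hH : ContDiff ℝ 1 (fun q : EuclideanSpace ℝ (Fin d) × EuclideanSpace ℝ (Fin d) =>
      H q.1 q.2))
    (αH : ℝ) (hαH : 0 < αH)
    (hconv : ∀ x : EuclideanSpace ℝ (Fin d),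
      ConvexOn ℝ Set.univ (fun p => H x p - αH / 2 * ‖p‖ ^ 2))
    (F G : EuclideanSpace ℝ (Fin d) → EuclideanSpace ℝ (Fin d) → EuclideanSpace ℝ (Fin d))
    (hF : ∀ x p, F x p = gradient (fun q => H x q) p)
    (hG : ∀ x p, G x p = -gradient (fun z => H z p) x)
    (hmono : ∀ x y p q : EuclideanSpace ℝ (Fin d),
      0 ≤ ⟪F x p - F y q, p - q⟫ + ⟪G x p - G y q, x - y⟫) :
    ∀ x y p q : EuclideanSpace ℝ (Fin d),
      αH * ‖p - q‖ ^ 2 ≤ ⟪F x p - F y q, p - q⟫ + ⟪G x p - G y q, x - y⟫ := by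
  intro x y p q
  -- Differentiability of the two partial maps
  have hHx : ∀ a : EuclideanSpace ℝ (Fin d), ContDiff ℝ 1 (fun p' => H a p') := by
    intro a
    exact hH.comp (contDiff_const.prodMk contDiff_id)
  have hHr : ∀ r : EuclideanSpace ℝ (Fin d), ContDiff ℝ 1 (fun z => H z r) := by
    intro r
    exact hH.comp (contDiff_id.prodMk contDiff_const)
  -- Strong convexity estimates in the `p` variable, at `x` and at `y`
  have hA_y := strong_slice (fun p' => H y p') (hHx y) αH (hconv y) p q
  have hA_x := strong_slice (fun p' => H x p') (hHx x) αH (hconv x) p q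
  -- Concavity-type estimates in the `x` variable, at `p` and at `q`
  have hanti : ∀ r : EuclideanSpace ℝ (Fin d), ∀ s t : ℝ, s ≤ t →
      ⟪gradient (fun z => H z r) (t • (y - x) + x), y - x⟫ ≤
        ⟪gradient (fun z => H z r) (s • (y - x) + x), y - x⟫ := by
    intro r s t hst
    rcases eq_or_lt_of_le hst with rfl | hst'
    · exact le_rfl
    · set ls : EuclideanSpace ℝ (Fin d) := s • (y - x) + x with hls
      set lt : EuclideanSpace ℝ (Fin d) := t • (y - x) + x with hlt
      have hm := hmono lt ls r r
      have hrr : r - r = (0 : EuclideanSpace ℝ (Fin d)) := sub_self r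
      rw [hrr, inner_zero_right] at hm
      have hdiff : lt - ls = (t - s) • (y - x) := by
        rw [hls, hlt]
        module
      rw [hdiff] at hm
      have hGsub : G lt r - G ls r =
          -(gradient (fun z => H z r) lt - gradient (fun z => H z r) ls) := by
        rw [hG, hG]
        abel
      rw [hGsub] at hm
      rw [inner_smul_right, inner_neg_left, inner_sub_left] at hm
      have hpos : (0 : ℝ) < t - s := sub_pos.mpr hst'
      nlinarith [hm]
  have hB_p := concave_dir (fun z => H z p) (hHr p) x y (hanti p)
  have hB_q := concave_dir (fun z => H z q) (hHr q) x y (hanti q)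
  -- Assemble
  obtain ⟨h1, -⟩ := hA_y
  obtain ⟨-, h2⟩ := hA_x
  obtain ⟨h3, -⟩ := hB_p
  obtain ⟨-, h4⟩ := hB_q
  have e1 : ⟪F x p - F y q, p - q⟫ =
      ⟪gradient (fun q' => H x q') p, p - q⟫ - ⟪gradient (fun q' => H y q') q, p - q⟫ := by
    rw [hF, hF, inner_sub_left]
  have e2 : ⟪G x p - G y q, x - y⟫ =
      ⟪gradient (fun z => H z p) x, y - x⟫ - ⟪gradient (fun z => H z q) y, y - x⟫ := by
    rw [hG, hG]
    simp only [inner_sub_left, inner_sub_right, inner_neg_left]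
    ring
  rw [e1, e2]
  linarith [h1, h2, h3, h4]
end
end

section
/- Let T > 0, L ≥ 0, d ≥ 1. Let c₁, c₂ : [0,T] × ℝ^d → ℝ^d be such that for every s ∈ [0,T] and i ∈ {1,2}, z ↦ c_i(s,z) is L-Lipschitz, for every z the map s ↦ c_i(s,z) is measurable, and the function D(s) := sup_z ‖c₁(s,z) − c₂(s,z)‖ is finite and integrable on [0,T]. Let w : [0,T] → ℝ^d be any function, x₀ ∈ ℝ^d, and let x¹, x² : [0,T] → ℝ^d be continuous functions satisfying, for all t ∈ [0,T] and i ∈ {1,2}, x^i(t) = x₀ + ∫₀^t c_i(s, x^i(s)) ds + w(t). Then for all t ∈ [0,T], ‖x¹(t) − x²(t)‖ ≤ e^{Lt} ∫₀^t D(s) ds. -/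
open MeasureTheory Set
open scoped NNReal

noncomputable section

/-- Carathéodory-type measurability: if `c` is measurable in time and Lipschitz in
space (on the time window), and `y` is continuous, then `s ↦ c s (y s)` is a.e.
strongly measurable on the window. -/
lemma caratheodory_aux {d : ℕ} {T : ℝ} (hT : 0 ≤ T) (L : ℝ≥0)
    (c : ℝ → EuclideanSpace ℝ (Fin d) → EuclideanSpace ℝ (Fin d))
    (hlip : ∀ s ∈ Icc (0 : ℝ) T, LipschitzWith L (c s))
    (hmeas : ∀ z, Measurable fun s => c s z)
    (y : ℝ → EuclideanSpace ℝ (Fin d)) (hy : ContinuousOn y (Icc (0 : ℝ) T)) :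
    AEStronglyMeasurable (fun s => c s (y s)) (volume.restrict (Icc (0 : ℝ) T)) := by
  classical
  let c' : ℝ → EuclideanSpace ℝ (Fin d) → EuclideanSpace ℝ (Fin d) :=
    fun s z => if s ∈ Icc (0 : ℝ) T then c s z else 0
  have hmeas' : ∀ z, Measurable fun s => c' s z := fun z =>
    Measurable.ite measurableSet_Icc (hmeas z) measurable_const
  have hcont' : ∀ s, Continuous fun z => c' s z := by
    intro s
    by_cases hs : s ∈ Icc (0 : ℝ) T
    · have : (fun z => c' s z) = c s := by funext z; exact if_pos hs
      rw [this]; exact (hlip s hs).continuous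
    · have : (fun z => c' s z) = fun _ => 0 := by funext z; exact if_neg hs
      rw [this]; exact continuous_const
  let y' : ℝ → EuclideanSpace ℝ (Fin d) := fun s => y (max 0 (min s T))
  have hmem : ∀ s : ℝ, max 0 (min s T) ∈ Icc (0 : ℝ) T := by
    intro s
    exact ⟨le_max_left _ _, max_le hT (min_le_right _ _)⟩
  have hy'cont : Continuous y' :=
    hy.comp_continuous (continuous_const.max (continuous_id.min continuous_const)) hmem
  have key : Measurable (Function.uncurry fun (z : EuclideanSpace ℝ (Fin d)) (s : ℝ) => c' s z) :=
    measurable_uncurry_of_continuous_of_measurable (fun s => hcont' s) hmeas'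
  have hg : Measurable fun s => c' s (y' s) :=
    key.comp (hy'cont.measurable.prodMk measurable_id)
  refine hg.aestronglyMeasurable.congr ?_
  refine Filter.eventuallyEq_of_mem (self_mem_ae_restrict measurableSet_Icc) ?_
  intro s hs
  have h1 : y' s = y s := by
    show y (max 0 (min s T)) = y s
    rw [min_eq_left hs.2, max_eq_right hs.1]
  show c' s (y' s) = c s (y s)
  rw [h1]; exact if_pos hs

/-- The basic integral identity used in the Grönwall iteration. -/
lemma poly_int_aux (L : ℝ) (n : ℕ) (u : ℝ) :
    L * ∫ s in (0:ℝ)..u, ∑ k ∈ Finset.range n, L ^ k * s ^ k / (Nat.factorial k) =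
      (∑ k ∈ Finset.range (n + 1), L ^ k * u ^ k / (Nat.factorial k)) - 1 := by
  rw [intervalIntegral.integral_finset_sum (f := fun k (s : ℝ) => L ^ k * s ^ k / (Nat.factorial k)) (fun k _ =>
    ((continuous_const.mul (continuous_pow k)).div_const _).intervalIntegrable 0 u)]
  have hterm : ∀ k : ℕ, (∫ s in (0:ℝ)..u, L ^ k * s ^ k / (Nat.factorial k)) =
      (L ^ k / (Nat.factorial k)) * (u ^ (k + 1) / (k + 1)) := by
    intro k
    have : (fun s : ℝ => L ^ k * s ^ k / (Nat.factorial k)) =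
        fun s : ℝ => (L ^ k / (Nat.factorial k)) * s ^ k := by
      funext s; ring
    rw [this, intervalIntegral.integral_const_mul, integral_pow]
    rw [zero_pow (Nat.succ_ne_zero k)]
    ring
  simp only [hterm]
  rw [Finset.sum_range_succ']
  simp only [pow_zero, Nat.factorial_zero, Nat.cast_one, mul_one, one_div, inv_one, Finset.mul_sum]
  rw [add_sub_cancel_right]
  refine Finset.sum_congr rfl fun i _ => ?_
  have h1 : ((Nat.factorial i : ℝ)) ≠ 0 := Nat.cast_ne_zero.2 (Nat.factorial_ne_zero i)
  have h2 : ((i : ℝ) + 1) ≠ 0 := by positivity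
  rw [Nat.factorial_succ]
  push_cast
  field_simp
  ring

/-- **Pathwise core of Lemma 2.2.** Two integral-equation flows driven by the same
noise path `w` and starting from the same point, with `L`-Lipschitz drifts `c₁, c₂`,
stay at distance at most `e^{Lt} ∫₀^t sup_z ‖c₁(s,z) − c₂(s,z)‖ ds`. -/
theorem pathwise_drift_stability (d : ℕ) (hd : 1 ≤ d) (T : ℝ) (hT : 0 < T) (L : ℝ≥0)
    (c₁ c₂ : ℝ → EuclideanSpace ℝ (Fin d) → EuclideanSpace ℝ (Fin d))
    (hlip₁ : ∀ s ∈ Icc (0 : ℝ) T, LipschitzWith L (c₁ s))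
    (hlip₂ : ∀ s ∈ Icc (0 : ℝ) T, LipschitzWith L (c₂ s))
    (hmeas₁ : ∀ z, Measurable fun s => c₁ s z)
    (hmeas₂ : ∀ z, Measurable fun s => c₂ s z)
    (hfin : ∀ s ∈ Icc (0 : ℝ) T,
      BddAbove (Set.range fun z : EuclideanSpace ℝ (Fin d) => ‖c₁ s z - c₂ s z‖))
    (hDint : IntegrableOn
      (fun s => ⨆ z : EuclideanSpace ℝ (Fin d), ‖c₁ s z - c₂ s z‖) (Icc (0 : ℝ) T))
    (w : ℝ → EuclideanSpace ℝ (Fin d)) (x₀ : EuclideanSpace ℝ (Fin d))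
    (x₁ x₂ : ℝ → EuclideanSpace ℝ (Fin d))
    (hx₁cont : ContinuousOn x₁ (Icc (0 : ℝ) T))
    (hx₂cont : ContinuousOn x₂ (Icc (0 : ℝ) T))
    (heq₁ : ∀ t ∈ Icc (0 : ℝ) T, x₁ t = x₀ + (∫ s in (0 : ℝ)..t, c₁ s (x₁ s)) + w t)
    (heq₂ : ∀ t ∈ Icc (0 : ℝ) T, x₂ t = x₀ + (∫ s in (0 : ℝ)..t, c₂ s (x₂ s)) + w t) :
    ∀ t ∈ Icc (0 : ℝ) T,
      ‖x₁ t - x₂ t‖ ≤ Real.exp ((L : ℝ) * t) *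
        ∫ s in (0 : ℝ)..t, ⨆ z : EuclideanSpace ℝ (Fin d), ‖c₁ s z - c₂ s z‖ := by
  classical
  intro t ht
  obtain ⟨ht0, htT⟩ := ht
  set D : ℝ → ℝ := fun s => ⨆ z : EuclideanSpace ℝ (Fin d), ‖c₁ s z - c₂ s z‖ with hD
  set φ : ℝ → ℝ := fun s => ‖x₁ s - x₂ s‖ with hφ
  set f₁ : ℝ → EuclideanSpace ℝ (Fin d) := fun s => c₁ s (x₁ s) with hf₁
  set f₂ : ℝ → EuclideanSpace ℝ (Fin d) := fun s => c₂ s (x₂ s) with hf₂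
  -- basic facts about D
  have hD0 : ∀ s ∈ Icc (0 : ℝ) T, 0 ≤ D s := fun s hs =>
    le_trans (norm_nonneg _) (le_ciSup (hfin s hs) 0)
  have hDle : ∀ s ∈ Icc (0 : ℝ) T, ∀ z, ‖c₁ s z - c₂ s z‖ ≤ D s := fun s hs z =>
    le_ciSup (hfin s hs) z
  have hDii : ∀ u v : ℝ, 0 ≤ u → u ≤ v → v ≤ T → IntervalIntegrable D volume u v := by
    intro u v hu huv hv
    rw [intervalIntegrable_iff_integrableOn_Ioc_of_le huv]
    exact hDint.mono_set (fun s hs => ⟨le_trans hu hs.1.le, le_trans hs.2 hv⟩)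
  set G : ℝ → ℝ := fun u => ∫ s in (0:ℝ)..u, D s with hG
  have hGnonneg : ∀ u ∈ Icc (0 : ℝ) T, 0 ≤ G u := by
    intro u hu
    exact intervalIntegral.integral_nonneg hu.1 (fun s hs => hD0 s ⟨hs.1, le_trans hs.2 hu.2⟩)
  have hGmono : ∀ u ∈ Icc (0 : ℝ) t, G u ≤ G t := by
    intro u hu
    have h1 : IntervalIntegrable D volume 0 u := hDii 0 u le_rfl hu.1 (le_trans hu.2 htT)
    have h2 : IntervalIntegrable D volume u t := hDii u t hu.1 hu.2 htT
    have hsplit := intervalIntegral.integral_add_adjacent_intervals h1 h2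
    have hpos : 0 ≤ ∫ s in u..t, D s :=
      intervalIntegral.integral_nonneg hu.2 (fun s hs => hD0 s ⟨le_trans hu.1 hs.1, le_trans hs.2 htT⟩)
    have : G t = G u + ∫ s in u..t, D s := (hsplit.symm : _)
    linarith
  -- a uniform bound on φ
  have hφcont : ContinuousOn φ (Icc (0 : ℝ) T) := (hx₁cont.sub hx₂cont).norm
  obtain ⟨C, hC⟩ : ∃ C : ℝ, ∀ s ∈ Icc (0 : ℝ) T, φ s ≤ C := by
    obtain ⟨C, hC⟩ := (isCompact_Icc.image_of_continuousOn hφcont).bddAbove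
    exact ⟨C, fun s hs => hC ⟨s, hs, rfl⟩⟩
  have hC0 : 0 ≤ C := le_trans (norm_nonneg _) (hC 0 ⟨le_rfl, hT.le⟩)
  -- measurability of the composed drifts
  have hm₁ : AEStronglyMeasurable f₁ (volume.restrict (Icc (0 : ℝ) T)) :=
    caratheodory_aux hT.le L c₁ hlip₁ hmeas₁ x₁ hx₁cont
  have hm₂ : AEStronglyMeasurable f₂ (volume.restrict (Icc (0 : ℝ) T)) :=
    caratheodory_aux hT.le L c₂ hlip₂ hmeas₂ x₂ hx₂cont
  -- the difference of the drifts is integrable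
  have hdiffI : IntervalIntegrable (fun s => f₂ s - f₁ s) volume 0 t := by
    rw [intervalIntegrable_iff_integrableOn_Ioc_of_le ht0]
    have hsub : Ioc (0 : ℝ) t ⊆ Icc (0 : ℝ) T := fun s hs => ⟨hs.1.le, le_trans hs.2 htT⟩
    refine Integrable.mono' (g := fun s => D s + (L : ℝ) * C)
      ((hDint.mono_set hsub).add (integrableOn_const measure_Ioc_lt_top.ne))
      ((hm₂.sub hm₁).mono_measure (Measure.restrict_mono hsub le_rfl)) ?_
    refine Filter.eventually_of_mem (self_mem_ae_restrict measurableSet_Ioc) ?_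
    intro s hs
    have hs' : s ∈ Icc (0 : ℝ) T := hsub hs
    have e1 : f₂ s - f₁ s = (c₂ s (x₂ s) - c₂ s (x₁ s)) + (c₂ s (x₁ s) - c₁ s (x₁ s)) := by
      show c₂ s (x₂ s) - c₁ s (x₁ s) = _
      abel
    calc ‖f₂ s - f₁ s‖ ≤ ‖c₂ s (x₂ s) - c₂ s (x₁ s)‖ + ‖c₂ s (x₁ s) - c₁ s (x₁ s)‖ := by
          rw [e1]; exact norm_add_le _ _
      _ ≤ (L : ℝ) * φ s + D s := by
          refine add_le_add ?_ ?_
          · have := (hlip₂ s hs').dist_le_mul (x₂ s) (x₁ s)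
            rw [dist_eq_norm] at this
            calc ‖c₂ s (x₂ s) - c₂ s (x₁ s)‖ ≤ (L : ℝ) * ‖x₂ s - x₁ s‖ := this
              _ = (L : ℝ) * φ s := by rw [hφ]; simp [norm_sub_rev]
          · rw [norm_sub_rev]; exact hDle s hs' _
      _ ≤ D s + (L : ℝ) * C := by
          have := hC s hs'
          have hL : (0 : ℝ) ≤ (L : ℝ) := L.coe_nonneg
          nlinarith
  by_cases h₁ : IntervalIntegrable f₁ volume 0 t
  · -- both drifts integrable: Grönwall argument
    have h₂ : IntervalIntegrable f₂ volume 0 t := by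
      have h := h₁.add hdiffI
      have e : (fun s => f₁ s + (f₂ s - f₁ s)) = f₂ := by
        funext s; abel
      rwa [e] at h
    -- restricted integrability
    have h₁u : ∀ u ∈ Icc (0 : ℝ) t, IntervalIntegrable f₁ volume 0 u := by
      intro u hu
      exact h₁.mono_set (by rw [uIcc_of_le hu.1, uIcc_of_le ht0]; exact Icc_subset_Icc le_rfl hu.2)
    have h₂u : ∀ u ∈ Icc (0 : ℝ) t, IntervalIntegrable f₂ volume 0 u := by
      intro u hu
      exact h₂.mono_set (by rw [uIcc_of_le hu.1, uIcc_of_le ht0]; exact Icc_subset_Icc le_rfl hu.2)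
    have hφu : ∀ u ∈ Icc (0 : ℝ) t, IntervalIntegrable φ volume 0 u := by
      intro u hu
      exact ContinuousOn.intervalIntegrable_of_Icc hu.1
        (hφcont.mono (Icc_subset_Icc le_rfl (le_trans hu.2 htT)))
    -- the fundamental integral inequality
    have key : ∀ u ∈ Icc (0 : ℝ) t, φ u ≤ G u + (L : ℝ) * ∫ s in (0:ℝ)..u, φ s := by
      intro u hu
      have hu' : u ∈ Icc (0 : ℝ) T := ⟨hu.1, le_trans hu.2 htT⟩
      have hxu : x₁ u - x₂ u = ∫ s in (0:ℝ)..u, (f₁ s - f₂ s) := by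
        rw [intervalIntegral.integral_sub (h₁u u hu) (h₂u u hu), heq₁ u hu', heq₂ u hu']
        abel
      have hDiu : IntervalIntegrable D volume 0 u := hDii 0 u le_rfl hu.1 hu'.2
      calc φ u = ‖∫ s in (0:ℝ)..u, (f₁ s - f₂ s)‖ := by
            show ‖x₁ u - x₂ u‖ = _
            rw [hxu]
        _ ≤ ∫ s in (0:ℝ)..u, ‖f₁ s - f₂ s‖ :=
            intervalIntegral.norm_integral_le_integral_norm hu.1
        _ ≤ ∫ s in (0:ℝ)..u, (D s + (L : ℝ) * φ s) := by
            refine intervalIntegral.integral_mono_on hu.1 ((h₁u u hu).sub (h₂u u hu)).norm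
              (hDiu.add ((hφu u hu).const_mul _)) ?_
            intro s hs
            have hs' : s ∈ Icc (0 : ℝ) T := ⟨hs.1, le_trans hs.2 hu'.2⟩
            have e1 : f₁ s - f₂ s = (c₁ s (x₁ s) - c₂ s (x₁ s)) + (c₂ s (x₁ s) - c₂ s (x₂ s)) := by
              show c₁ s (x₁ s) - c₂ s (x₂ s) = _
              abel
            calc ‖f₁ s - f₂ s‖
                ≤ ‖c₁ s (x₁ s) - c₂ s (x₁ s)‖ + ‖c₂ s (x₁ s) - c₂ s (x₂ s)‖ := by
                  rw [e1]; exact norm_add_le _ _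
              _ ≤ D s + (L : ℝ) * φ s := by
                  refine add_le_add (hDle s hs' _) ?_
                  have := (hlip₂ s hs').dist_le_mul (x₁ s) (x₂ s)
                  rw [dist_eq_norm] at this
                  exact this
        _ = G u + (L : ℝ) * ∫ s in (0:ℝ)..u, φ s := by
            rw [intervalIntegral.integral_add hDiu ((hφu u hu).const_mul _),
              intervalIntegral.integral_const_mul]
    -- the Grönwall iteration
    have main : ∀ n : ℕ, ∀ u ∈ Icc (0 : ℝ) t,
        φ u ≤ (∑ k ∈ Finset.range n, (L : ℝ) ^ k * u ^ k / (Nat.factorial k)) * G t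
          + C * ((L : ℝ) ^ n * u ^ n / (Nat.factorial n)) := by
      intro n
      induction n with
      | zero =>
        intro u hu
        simpa using hC u ⟨hu.1, le_trans hu.2 htT⟩
      | succ n ih =>
        intro u hu
        have hGt : 0 ≤ G t := hGnonneg t ⟨ht0, htT⟩
        have hL : (0 : ℝ) ≤ (L : ℝ) := L.coe_nonneg
        have hIH : ∫ s in (0:ℝ)..u, φ s ≤
            ∫ s in (0:ℝ)..u, ((∑ k ∈ Finset.range n, (L : ℝ) ^ k * s ^ k / (Nat.factorial k)) * G t
              + C * ((L : ℝ) ^ n * s ^ n / (Nat.factorial n))) := by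
          have hcont1 : Continuous fun s : ℝ =>
              (∑ k ∈ Finset.range n, (L : ℝ) ^ k * s ^ k / (Nat.factorial k)) * G t
                + C * ((L : ℝ) ^ n * s ^ n / (Nat.factorial n)) := by
            refine Continuous.add (Continuous.mul ?_ continuous_const)
              (continuous_const.mul ((continuous_const.mul (continuous_pow n)).div_const _))
            exact continuous_finset_sum _ fun k _ =>
              (continuous_const.mul (continuous_pow k)).div_const _
          refine intervalIntegral.integral_mono_on hu.1 (hφu u hu)
            (hcont1.intervalIntegrable 0 u) ?_
          intro s hs
          exact ih s ⟨hs.1, le_trans hs.2 hu.2⟩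
        have hint : ∫ s in (0:ℝ)..u, ((∑ k ∈ Finset.range n, (L : ℝ) ^ k * s ^ k / (Nat.factorial k)) * G t
              + C * ((L : ℝ) ^ n * s ^ n / (Nat.factorial n))) =
            G t * (∫ s in (0:ℝ)..u, ∑ k ∈ Finset.range n, (L : ℝ) ^ k * s ^ k / (Nat.factorial k))
              + (C * (L : ℝ) ^ n / (Nat.factorial n)) * (u ^ (n + 1) / (n + 1)) := by
          have e : (fun s : ℝ => (∑ k ∈ Finset.range n, (L : ℝ) ^ k * s ^ k / (Nat.factorial k)) * G t
              + C * ((L : ℝ) ^ n * s ^ n / (Nat.factorial n))) =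
              fun s : ℝ => G t * (∑ k ∈ Finset.range n, (L : ℝ) ^ k * s ^ k / (Nat.factorial k))
                + (C * (L : ℝ) ^ n / (Nat.factorial n)) * s ^ n := by
            funext s; ring
          have hc1 : Continuous fun s : ℝ =>
              G t * (∑ k ∈ Finset.range n, (L : ℝ) ^ k * s ^ k / (Nat.factorial k)) :=
            continuous_const.mul (continuous_finset_sum _ fun k _ =>
              (continuous_const.mul (continuous_pow k)).div_const _)
          have hc2 : Continuous fun s : ℝ =>
              (C * (L : ℝ) ^ n / (Nat.factorial n)) * s ^ n :=
            continuous_const.mul (continuous_pow n)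
          rw [e, intervalIntegral.integral_add (hc1.intervalIntegrable 0 u)
              (hc2.intervalIntegrable 0 u), intervalIntegral.integral_const_mul,
            intervalIntegral.integral_const_mul, integral_pow, zero_pow (Nat.succ_ne_zero n)]
          ring
        have hpoly := poly_int_aux (L : ℝ) n u
        calc φ u ≤ G u + (L : ℝ) * ∫ s in (0:ℝ)..u, φ s := key u hu
          _ ≤ G t + (L : ℝ) * ∫ s in (0:ℝ)..u, φ s := by
              have := hGmono u hu; linarith
          _ ≤ G t + (L : ℝ) * (G t * (∫ s in (0:ℝ)..u, ∑ k ∈ Finset.range n,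
                (L : ℝ) ^ k * s ^ k / (Nat.factorial k))
              + (C * (L : ℝ) ^ n / (Nat.factorial n)) * (u ^ (n + 1) / (n + 1))) := by
              have h' := mul_le_mul_of_nonneg_left hIH hL
              rw [hint] at h'
              linarith
          _ = (∑ k ∈ Finset.range (n + 1), (L : ℝ) ^ k * u ^ k / (Nat.factorial k)) * G t
              + C * ((L : ℝ) ^ (n + 1) * u ^ (n + 1) / (Nat.factorial (n + 1))) := by
              have hfac : ((Nat.factorial (n + 1) : ℝ)) = ((n : ℝ) + 1) * (Nat.factorial n) := by
                rw [Nat.factorial_succ]; push_cast; ring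
              rw [hfac]
              have hn1 : ((n : ℝ) + 1) ≠ 0 := by positivity
              have hfn : ((Nat.factorial n : ℝ)) ≠ 0 :=
                Nat.cast_ne_zero.2 (Nat.factorial_ne_zero n)
              linear_combination (norm := (field_simp; ring)) (G t) * hpoly
    -- pass to the limit
    have hLt : (0 : ℝ) ≤ (L : ℝ) * t := mul_nonneg L.coe_nonneg ht0
    have hGt : 0 ≤ G t := hGnonneg t ⟨ht0, htT⟩
    have hbound : ∀ n : ℕ, φ t ≤ Real.exp ((L : ℝ) * t) * G t
        + C * (((L : ℝ) * t) ^ n / (Nat.factorial n)) := by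
      intro n
      have h1 := main n t ⟨ht0, le_rfl⟩
      have h2 : (∑ k ∈ Finset.range n, (L : ℝ) ^ k * t ^ k / (Nat.factorial k))
          ≤ Real.exp ((L : ℝ) * t) := by
        have := Real.sum_le_exp_of_nonneg hLt n
        refine le_trans (le_of_eq ?_) this
        refine Finset.sum_congr rfl fun k _ => ?_
        rw [mul_pow]
      have h3 : (∑ k ∈ Finset.range n, (L : ℝ) ^ k * t ^ k / (Nat.factorial k)) * G t
          ≤ Real.exp ((L : ℝ) * t) * G t := mul_le_mul_of_nonneg_right h2 hGt
      have h4 : (L : ℝ) ^ n * t ^ n = ((L : ℝ) * t) ^ n := (mul_pow _ _ _).symm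
      rw [h4] at h1
      linarith
    have hlim : Filter.Tendsto (fun n : ℕ => Real.exp ((L : ℝ) * t) * G t
        + C * (((L : ℝ) * t) ^ n / (Nat.factorial n))) Filter.atTop
        (nhds (Real.exp ((L : ℝ) * t) * G t)) := by
      have h0 := (FloorSemiring.tendsto_pow_div_factorial_atTop ((L : ℝ) * t)).const_mul C
      have := h0.const_add (Real.exp ((L : ℝ) * t) * G t)
      simpa using this
    exact ge_of_tendsto hlim (Filter.Eventually.of_forall hbound)
  · -- at least one drift non-integrable: both integrals are junk `0`
    have h₂ : ¬ IntervalIntegrable f₂ volume 0 t := by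
      intro h
      apply h₁
      have h' := h.sub hdiffI
      have e : (fun s => f₂ s - (f₂ s - f₁ s)) = f₁ := by funext s; abel
      rwa [e] at h'
    have e1 : (∫ s in (0:ℝ)..t, f₁ s) = 0 := intervalIntegral.integral_undef h₁
    have e2 : (∫ s in (0:ℝ)..t, f₂ s) = 0 := intervalIntegral.integral_undef h₂
    have hx : x₁ t - x₂ t = 0 := by
      rw [heq₁ t ⟨ht0, htT⟩, heq₂ t ⟨ht0, htT⟩]
      rw [show (∫ s in (0:ℝ)..t, c₁ s (x₁ s)) = 0 from e1,
        show (∫ s in (0:ℝ)..t, c₂ s (x₂ s)) = 0 from e2]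
      abel
    rw [hx, norm_zero]
    exact mul_nonneg (Real.exp_nonneg _) (hGnonneg t ⟨ht0, htT⟩)
end
end
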